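/- arXiv:1511.04039 — 8 statements merged into one kernel-verified Lean document; each statement's English description precedes it below -/
import Mathlib

section
/- Every delta operator 𝔡 has a unique sequence of basic polynomials, i.e., a unique sequence (p_n)_{n≥0} in K[x] with p_0 = 1, p_n(0) = 0 for n ≥ 1, and 𝔡(p_n) = n·p_{n−1} for all n ≥ 1. -/
open Polynomial

/-- The shift operator `E_a : K[x] → K[x]`, `f(x) ↦ f(x+a)`, as a linear endomorphism. -/
noncomputable def shiftOp (K : Type*) [Field K] (a : K) : Module.End K (Polynomial K) :=
  (aeval (X + C a) : Polynomial K →ₐ[K] Polynomial K).toLinearMap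

/-- A linear operator on `K[x]` is shift-invariant if it commutes with every shift `E_a`. -/
def IsShiftInvariant {K : Type*} [Field K] (s : Module.End K (Polynomial K)) : Prop :=
  ∀ a : K, s ∘ₗ shiftOp K a = shiftOp K a ∘ₗ s

/-- A delta operator: shift-invariant and sends `X` to a nonzero constant. -/
def IsDeltaOperator {K : Type*} [Field K] (d : Module.End K (Polynomial K)) : Prop :=
  IsShiftInvariant d ∧ ∃ c : K, c ≠ 0 ∧ d X = C c

/-- The sequence of basic polynomials of a delta operator `d`. -/
def IsBasicSequence {K : Type*} [Field K] (d : Module.End K (Polynomial K))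
    (p : ℕ → Polynomial K) : Prop :=
  p 0 = 1 ∧ (∀ n, 1 ≤ n → (p n).eval 0 = 0) ∧
    ∀ n, 1 ≤ n → d (p n) = (n : K) • p (n - 1)

/-- The generalized Gončarov basis associated with the pair `(d, z)`:
`deg t_n = n` and `ε_{z_i}(d^i t_n) = n! δ_{i,n}`. -/
def IsGoncarovBasis {K : Type*} [Field K] (d : Module.End K (Polynomial K))
    (z : ℕ → K) (t : ℕ → Polynomial K) : Prop :=
  ∀ n, (t n).natDegree = n ∧
    ∀ i, ((d ^ i) (t n)).eval (z i) = if i = n then (n.factorial : K) else 0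

section Aux
variable {K : Type*} [Field K] [CharZero K] (d : Module.End K (Polynomial K))

lemma d_one (hsi : IsShiftInvariant d) {c : K} (hdX : d X = C c) : d 1 = 0 := by
  have h := congrArg (fun s : Module.End K (Polynomial K) => s X) (hsi 1)
  simp only [LinearMap.comp_apply, shiftOp, AlgHom.toLinearMap_apply, aeval_X, hdX,
    aeval_C] at h
  have h2 : d X + d (C 1) = C c := by
    rw [← map_add]
    simpa using h
  rw [hdX] at h2
  simpa using h2

lemma d_C (hsi : IsShiftInvariant d) {c : K} (hdX : d X = C c) (a : K) : d (C a) = 0 := by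
  have : (C a : Polynomial K) = a • 1 := by simp [smul_eq_C_mul]
  rw [this, map_smul, d_one d hsi hdX, smul_zero]

end Aux

set_option linter.unusedSectionVars false

section Aux2
variable {K : Type*} [Field K] [CharZero K] (d : Module.End K (Polynomial K))

lemma key_eval (hsi : IsShiftInvariant d) {c : K} (hdX : d X = C c) (n : ℕ) (a : K) :
    (d (X ^ n)).eval a =
      ∑ k ∈ Finset.range (n + 1), (n.choose k : K) * a ^ (n - k) * ((d (X ^ k)).eval 0) := by
  have h := congrArg (fun s : Module.End K (Polynomial K) => s (X ^ n)) (hsi a)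
  simp only [LinearMap.comp_apply, shiftOp, AlgHom.toLinearMap_apply, map_pow, aeval_X] at h
  -- h : d ((X + C a) ^ n) = aeval (X + C a) (d (X ^ n))
  have hexp : ((X : Polynomial K) + C a) ^ n
      = ∑ k ∈ Finset.range (n + 1), (a ^ (n - k) * (n.choose k : K)) • X ^ k := by
    rw [add_pow]
    refine Finset.sum_congr rfl fun k _ => ?_
    simp only [smul_eq_C_mul, ← C_pow, ← C_eq_natCast]
    rw [mul_assoc, ← C_mul, mul_comm]
  rw [hexp, map_sum] at h
  have h2 : aeval ((X : Polynomial K) + C a) (d (X ^ n)) = (d (X ^ n)).comp (X + C a) := by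
    rw [comp_eq_aeval]
  rw [h2] at h
  have h3 := congrArg (fun q : Polynomial K => q.eval 0) h
  simp only [eval_finset_sum, map_smul, eval_smul, smul_eq_mul, eval_comp, eval_add, eval_X,
    eval_C, zero_add] at h3
  rw [← h3]
  refine Finset.sum_congr rfl fun k _ => ?_
  ring

end Aux2

section Aux3
variable {K : Type*} [Field K] [CharZero K] (d : Module.End K (Polynomial K))
  (hsi : IsShiftInvariant d) {c : K} (hdX : d X = C c)
include hsi hdX

lemma q_eq (n : ℕ) : d (X ^ n) =
    ∑ k ∈ Finset.range (n + 1), C ((n.choose k : K) * ((d (X ^ k)).eval 0)) * X ^ (n - k) := by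
  apply Polynomial.funext
  intro a
  rw [key_eval d hsi hdX n a, eval_finset_sum]
  refine Finset.sum_congr rfl fun k _ => ?_
  simp only [eval_mul, eval_C, eval_pow, eval_X]
  ring

lemma q_deg (n : ℕ) (hn : 1 ≤ n) : (d (X ^ n)).natDegree ≤ n - 1 := by
  rw [q_eq d hsi hdX n]
  refine natDegree_sum_le_of_forall_le _ _ fun k hk => ?_
  rcases Nat.eq_zero_or_pos k with rfl | hk1
  · have h0 : d (1 : Polynomial K) = 0 := d_one d hsi hdX
    simp [h0]
  · refine le_trans (natDegree_C_mul_le _ _) ?_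
    rw [natDegree_X_pow]
    omega

lemma q_coeff (n : ℕ) (hn : 1 ≤ n) : (d (X ^ n)).coeff (n - 1) = (n : K) * c := by
  rw [q_eq d hsi hdX n, finset_sum_coeff]
  rw [Finset.sum_eq_single 1]
  · simp only [coeff_C_mul, coeff_X_pow]
    have hq1 : ((d (X ^ 1)).eval 0) = c := by rw [pow_one, hdX, eval_C]
    rw [hq1]
    simp [Nat.choose_one_right]
  · intro k hk hkne
    simp only [Finset.mem_range] at hk
    rcases Nat.eq_zero_or_pos k with rfl | hk1
    · have h0 : d (1 : Polynomial K) = 0 := d_one d hsi hdX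
      simp [h0]
    · have : k ≥ 2 := by omega
      rw [coeff_C_mul, coeff_X_pow, if_neg (by omega), mul_zero]
  · intro h
    exact absurd (Finset.mem_range.mpr (by omega)) h

end Aux3

section Aux4
variable {K : Type*} [Field K] [CharZero K] (d : Module.End K (Polynomial K))
  (hsi : IsShiftInvariant d) {c : K} (hdX : d X = C c)
include hsi hdX

lemma dp_expand (p : Polynomial K) (m : ℕ) (hp : p.natDegree ≤ m) :
    d p = ∑ i ∈ Finset.range (m + 1), p.coeff i • d (X ^ i) := by
  conv_lhs => rw [p.as_sum_range' (m + 1) (by omega)]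
  rw [map_sum]
  refine Finset.sum_congr rfl fun i _ => ?_
  rw [← C_mul_X_pow_eq_monomial, ← smul_eq_C_mul, map_smul]

lemma dp_deg (p : Polynomial K) (m : ℕ) (hm : 1 ≤ m) (hp : p.natDegree ≤ m) :
    (d p).natDegree ≤ m - 1 := by
  rw [dp_expand d hsi hdX p m hp]
  refine natDegree_sum_le_of_forall_le _ _ fun i hi => ?_
  rcases Nat.eq_zero_or_pos i with rfl | hi1
  · have h0 : d (1 : Polynomial K) = 0 := d_one d hsi hdX
    simp [h0]
  · refine le_trans (natDegree_smul_le _ _) (le_trans (q_deg d hsi hdX i hi1) ?_)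
    simp only [Finset.mem_range] at hi
    omega

lemma dp_coeff (p : Polynomial K) (m : ℕ) (hm : 1 ≤ m) (hp : p.natDegree ≤ m) :
    (d p).coeff (m - 1) = (m : K) * c * p.coeff m := by
  rw [dp_expand d hsi hdX p m hp, finset_sum_coeff]
  rw [Finset.sum_eq_single m]
  · rw [coeff_smul, q_coeff d hsi hdX m hm, smul_eq_mul]
    ring
  · intro i hi hine
    simp only [Finset.mem_range] at hi
    rcases Nat.eq_zero_or_pos i with rfl | hi1
    · have h0 : d (1 : Polynomial K) = 0 := d_one d hsi hdX
      simp [h0]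
    · have hz : (d (X ^ i)).coeff (m - 1) = 0 :=
        coeff_eq_zero_of_natDegree_lt (lt_of_le_of_lt (q_deg d hsi hdX i hi1) (by omega))
      rw [coeff_smul, hz, smul_zero]
  · intro h
    exact absurd (Finset.mem_range.mpr (by omega)) h

lemma ker_const (hc : c ≠ 0) (p : Polynomial K) (h : d p = 0) : p = C (p.coeff 0) := by
  rcases Nat.eq_zero_or_pos p.natDegree with h0 | h1
  · exact Polynomial.eq_C_of_natDegree_eq_zero h0
  · exfalso
    have hco := dp_coeff d hsi hdX p p.natDegree h1 le_rfl
    rw [h, coeff_zero] at hco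
    have hp0 : p ≠ 0 := fun hh => by simp [hh] at h1
    have hlc : p.coeff p.natDegree ≠ 0 := mt leadingCoeff_eq_zero.mp hp0
    have hm : ((p.natDegree : K)) ≠ 0 := Nat.cast_ne_zero.mpr (by omega)
    exact (mul_ne_zero (mul_ne_zero hm hc) hlc) hco.symm

lemma surj_aux (hc : c ≠ 0) : ∀ (N : ℕ) (f : Polynomial K), f.natDegree < N → ∃ g, d g = f := by
  intro N
  induction N with
  | zero => intro f hf; exact absurd hf (Nat.not_lt_zero _)
  | succ N ih =>
    intro f hf
    rcases eq_or_ne f 0 with rfl | hf0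
    · exact ⟨0, map_zero d⟩
    set m := f.natDegree + 1 with hm
    set g₀ : Polynomial K := (f.leadingCoeff / ((m : K) * c)) • X ^ m with hg₀
    have hmc : ((m : K)) * c ≠ 0 :=
      mul_ne_zero (Nat.cast_ne_zero.mpr (by omega)) hc
    have hdg₀ : d g₀ = (f.leadingCoeff / ((m : K) * c)) • d (X ^ m) := by
      rw [hg₀, map_smul]
    have hdeg : (d g₀).natDegree ≤ f.natDegree := by
      rw [hdg₀]
      refine le_trans (natDegree_smul_le _ _) (le_trans (q_deg d hsi hdX m (by omega)) ?_)
      omega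
    have hcoeff : (d g₀).coeff f.natDegree = f.leadingCoeff := by
      rw [hdg₀, coeff_smul]
      have : m - 1 = f.natDegree := by omega
      rw [← this, q_coeff d hsi hdX m (by omega), smul_eq_mul, div_mul_cancel₀ _ hmc]
    set f' := f - d g₀ with hf'
    rcases eq_or_ne f' 0 with hz | hnz
    · exact ⟨g₀, (sub_eq_zero.mp hz).symm⟩
    · have hle : f'.natDegree ≤ f.natDegree :=
        le_trans (natDegree_sub_le _ _) (by simp [hdeg])
      have hco : f'.coeff f.natDegree = 0 := by
        rw [hf', coeff_sub, hcoeff, leadingCoeff, sub_self]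
      have hlt : f'.natDegree < f.natDegree := by
        rcases lt_or_eq_of_le hle with h | h
        · exact h
        · exfalso
          have := mt leadingCoeff_eq_zero.mp hnz
          rw [leadingCoeff, h] at this
          exact this hco
      obtain ⟨g', hg'⟩ := ih f' (by omega)
      exact ⟨g₀ + g', by rw [map_add, hg', hf']; ring⟩

lemma surj (hc : c ≠ 0) (f : Polynomial K) : ∃ g, d g = f :=
  surj_aux d hsi hdX hc (f.natDegree + 1) f (by omega)

end Aux4

theorem stmt1 {K : Type*} [Field K] [CharZero K] (d : Module.End K (Polynomial K))
    (hd : IsDeltaOperator d) :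
    ∃! p : ℕ → Polynomial K, IsBasicSequence d p := by
  obtain ⟨hsi, c, hc, hdX⟩ := hd
  -- choice function for preimages
  have hsurj : ∀ f : Polynomial K, ∃ g, d g = f := surj d hsi hdX hc
  set h : Polynomial K → Polynomial K := fun f => Classical.choose (hsurj f) with hh
  have hd' : ∀ f, d (h f) = f := fun f => Classical.choose_spec (hsurj f)
  set p : ℕ → Polynomial K := fun n =>
    Nat.rec 1 (fun n pn => h (((n + 1 : ℕ) : K) • pn) - C ((h (((n + 1 : ℕ) : K) • pn)).eval 0)) n
    with hp
  have hpsucc : ∀ n : ℕ, p (n + 1)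
      = h (((n + 1 : ℕ) : K) • p n) - C ((h (((n + 1 : ℕ) : K) • p n)).eval 0) := fun n => rfl
  refine ⟨p, ⟨rfl, ?_, ?_⟩, ?_⟩
  · intro n hn
    obtain ⟨m, rfl⟩ := Nat.exists_eq_succ_of_ne_zero (by omega : n ≠ 0)
    rw [hpsucc m, eval_sub, eval_C, sub_self]
  · intro n hn
    obtain ⟨m, rfl⟩ := Nat.exists_eq_succ_of_ne_zero (by omega : n ≠ 0)
    rw [hpsucc m, map_sub, hd', d_C d hsi hdX, sub_zero]
    simp
  · rintro q ⟨hq0, hqe, hqd⟩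
    funext n
    induction n with
    | zero => rw [hq0]; rfl
    | succ n ih =>
      have hdz : d (q (n + 1) - p (n + 1)) = 0 := by
        rw [map_sub, hqd (n + 1) (by omega)]
        have hpd : d (p (n + 1)) = ((n + 1 : ℕ) : K) • p n := by
          rw [hpsucc n, map_sub, hd', d_C d hsi hdX, sub_zero]
        rw [hpd]
        simp [ih]
      have hconst := ker_const d hsi hdX hc _ hdz
      have hev : (q (n + 1) - p (n + 1)).eval 0 = 0 := by
        have h1 : (p (n + 1)).eval 0 = 0 := by
          rw [hpsucc n, eval_sub, eval_C, sub_self]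
        rw [eval_sub, h1, hqe (n + 1) (by omega), sub_self]
      rw [← coeff_zero_eq_eval_zero] at hev
      rw [hev, map_zero] at hconst
      have := sub_eq_zero.mp hconst
      exact this
end

section
/- The sequence of basic polynomials of a delta operator is of binomial type: p_n(x+y) = Σ_{k=0}^n C(n,k) p_k(x) p_{n−k}(y) for all n. -/
open Polynomial

section Aux

variable {K : Type*} [Field K]

lemma shiftOp_apply (a : K) (f : K[X]) : shiftOp K a f = f.comp (X + C a) := by
  simp [shiftOp, aeval_def, comp, algebraMap_eq]

lemma shift_inv_apply {d : Module.End K (Polynomial K)} (hs : IsShiftInvariant d)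
    (a : K) (f : K[X]) : d (f.comp (X + C a)) = (d f).comp (X + C a) := by
  have := congrFun (congrArg DFunLike.coe (hs a)) f
  simpa [shiftOp_apply] using this

lemma aux_vanish [CharZero K] (N : ℕ) (F : ℕ → K[X])
    (h : ∀ a : K, ∑ k ∈ Finset.range N, a ^ k • F k = 0) :
    ∀ k ∈ Finset.range N, F k = 0 := by
  intro k hk
  ext j
  have h2 : ∀ a : K, (∑ i ∈ Finset.range N, C ((F i).coeff j) * X ^ i : K[X]).eval a = 0 := by
    intro a
    have := congrArg (fun q => Polynomial.coeff q j) (h a)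
    simp only [finset_sum_coeff, coeff_smul, coeff_zero, smul_eq_mul] at this
    rw [eval_finset_sum]
    simp only [eval_mul, eval_C, eval_pow, eval_X]
    rw [← this]
    exact Finset.sum_congr rfl fun i _ => mul_comm _ _
  have h3 : (∑ i ∈ Finset.range N, C ((F i).coeff j) * X ^ i : K[X]) = 0 :=
    Polynomial.funext (fun a => by simp [h2 a])
  have := congrArg (fun q => Polynomial.coeff q k) h3
  simpa [finset_sum_coeff, coeff_C_mul, coeff_X_pow, Finset.sum_ite_eq',
    Finset.mem_range.mp hk] using this

lemma comp_add_expand (f : K[X]) (a : K) (N : ℕ) (hN : f.natDegree < N) :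
    f.comp (X + C a) = ∑ k ∈ Finset.range N, a ^ k • Polynomial.hasseDeriv k f := by
  ext j
  rw [← taylor_apply, taylor_coeff]
  have hdeg : (hasseDeriv j f).natDegree < N := by
    refine lt_of_le_of_lt ?_ hN
    exact (natDegree_hasseDeriv_le f j).trans (Nat.sub_le _ _)
  rw [eval_eq_sum_range' hdeg]
  simp only [finset_sum_coeff, coeff_smul, smul_eq_mul, hasseDeriv_coeff]
  refine Finset.sum_congr rfl fun k _ => ?_
  rw [add_comm j k, Nat.choose_symm_add]
  ring

lemma d_comm_derivative [CharZero K] {d : Module.End K (Polynomial K)}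
    (hs : IsShiftInvariant d) (f : K[X]) :
    d (derivative f) = derivative (d f) := by
  set N := max f.natDegree (d f).natDegree + 2 with hN
  have key : ∀ a : K,
      ∑ k ∈ Finset.range N, a ^ k • (d (hasseDeriv k f) - hasseDeriv k (d f)) = 0 := by
    intro a
    have e1 : d (f.comp (X + C a)) = ∑ k ∈ Finset.range N, a ^ k • d (hasseDeriv k f) := by
      rw [comp_add_expand f a N (by omega), map_sum]
      simp [map_smul]
    have e2 : (d f).comp (X + C a) = ∑ k ∈ Finset.range N, a ^ k • hasseDeriv k (d f) :=
      comp_add_expand _ a N (by omega)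
    have hsi := shift_inv_apply hs a f
    calc ∑ k ∈ Finset.range N, a ^ k • (d (hasseDeriv k f) - hasseDeriv k (d f))
        = (∑ k ∈ Finset.range N, a ^ k • d (hasseDeriv k f))
          - ∑ k ∈ Finset.range N, a ^ k • hasseDeriv k (d f) := by
          simp [smul_sub, Finset.sum_sub_distrib]
      _ = 0 := by rw [← e1, ← e2, hsi, sub_self]
  have h1 := aux_vanish N _ key 1 (Finset.mem_range.mpr (by simp [hN]))
  have h2 := sub_eq_zero.mp h1
  simpa [hasseDeriv_one'] using h2

lemma d_one_eq_zero [CharZero K] {d : Module.End K (Polynomial K)}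
    (hd : IsDeltaOperator d) : d 1 = 0 := by
  obtain ⟨hs, c, hc, hdX⟩ := hd
  have h := d_comm_derivative hs X
  rw [derivative_X, hdX, derivative_C] at h
  exact h

lemma natDegree_eq_zero_of_ker [CharZero K] {d : Module.End K (Polynomial K)}
    (hd : IsDeltaOperator d) (f : K[X]) (hf : d f = 0) : f.natDegree = 0 := by
  obtain ⟨hs, c, hc, hdX⟩ := hd
  have hone : d 1 = 0 := d_one_eq_zero ⟨hs, c, hc, hdX⟩
  have deg1 : ∀ g : K[X], d g = 0 → g.natDegree ≠ 1 := by
    intro g hg h1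
    have hg0 : g ≠ 0 := fun h => by simp [h] at h1
    have hform : g = g.coeff 1 • X + g.coeff 0 • (1 : K[X]) := by
      rw [smul_eq_C_mul, smul_eq_C_mul, mul_one]
      exact eq_X_add_C_of_natDegree_le_one (le_of_eq h1)
    have hcomp : d g = g.coeff 1 • C c := by
      conv_lhs => rw [hform]
      rw [map_add, map_smul, map_smul, hdX, hone, smul_zero, add_zero]
    rw [hg] at hcomp
    have := (smul_eq_zero.mp hcomp.symm).resolve_right (by simpa using hc)
    have hlead : g.coeff 1 ≠ 0 := by
      rw [← h1]
      exact Polynomial.leadingCoeff_ne_zero.mpr hg0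
    exact hlead this
  suffices H : ∀ m : ℕ, ∀ g : K[X], d g = 0 → g.natDegree = m → m = 0 by
    exact H f.natDegree f hf rfl
  intro m
  induction m using Nat.strong_induction_on with
  | _ m IH =>
    intro f hf hm
    by_contra h0
    have hm1 : m ≠ 1 := fun h => deg1 f hf (hm.trans h)
    have hm2 : 2 ≤ m := by omega
    have hd' : d (derivative f) = 0 := by
      rw [d_comm_derivative hs, hf, map_zero]
    have hlt : (derivative f).natDegree < m := by
      rw [← hm]
      exact natDegree_derivative_lt (by omega)
    have hge : m - 1 ≤ (derivative f).natDegree := by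
      apply le_natDegree_of_ne_zero
      rw [coeff_derivative]
      have h1 : f.coeff (m - 1 + 1) ≠ 0 := by
        have : m - 1 + 1 = m := by omega
        rw [this, ← hm]
        exact Polynomial.leadingCoeff_ne_zero.mpr (fun h => by simp [h] at hm; omega)
      have h2 : ((m - 1 : ℕ) : K) + 1 ≠ 0 := Nat.cast_add_one_ne_zero (m - 1)
      exact mul_ne_zero h1 h2
    have := IH (derivative f).natDegree hlt (derivative f) hd' rfl
    omega


lemma ker_zero [CharZero K] {d : Module.End K (Polynomial K)}
    (hd : IsDeltaOperator d) (f : K[X]) (h1 : d f = 0) (h2 : f.eval 0 = 0) : f = 0 := by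
  have hdeg := natDegree_eq_zero_of_ker hd f h1
  have hC := Polynomial.eq_C_of_natDegree_eq_zero hdeg
  rw [hC] at h2 ⊢
  simp only [eval_C] at h2
  simp [h2]

end Aux

theorem stmt2 {K : Type*} [Field K] [CharZero K] (d : Module.End K (Polynomial K))
    (hd : IsDeltaOperator d) (p : ℕ → Polynomial K) (hp : IsBasicSequence d p) :
    ∀ (n : ℕ) (y : K), (p n).comp (X + C y) =
      ∑ k ∈ Finset.range (n + 1),
        (n.choose k : K) • ((p (n - k)).eval y • p k) := by
  obtain ⟨hp0, hpe, hpd⟩ := hp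
  obtain ⟨hshift, c, hc, hdX⟩ := hd
  intro n
  induction n with
  | zero => intro y; simp [hp0]
  | succ n IH =>
    intro y
    set S : K[X] := ∑ k ∈ Finset.range (n + 1 + 1),
      ((n + 1).choose k : K) • ((p (n + 1 - k)).eval y • p k) with hS
    have hdF : d ((p (n + 1)).comp (X + C y) - S) = 0 := by
      rw [map_sub]
      have h1 : d ((p (n + 1)).comp (X + C y)) =
          (((n + 1 : ℕ)) : K) • ∑ k ∈ Finset.range (n + 1),
            (n.choose k : K) • ((p (n - k)).eval y • p k) := by
        rw [shift_inv_apply hshift, hpd (n + 1) (by omega)]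
        simp only [Nat.add_sub_cancel]
        rw [smul_comp, IH y]
      have h2 : d S =
          (((n + 1 : ℕ)) : K) • ∑ k ∈ Finset.range (n + 1),
            (n.choose k : K) • ((p (n - k)).eval y • p k) := by
        rw [hS, map_sum, Finset.sum_range_succ']
        have hterm0 : d (((n + 1).choose 0 : K) • ((p (n + 1 - 0)).eval y • p 0)) = 0 := by
          rw [hp0, map_smul, map_smul, d_one_eq_zero ⟨hshift, c, hc, hdX⟩, smul_zero, smul_zero]
        rw [hterm0, add_zero, Finset.smul_sum]
        refine Finset.sum_congr rfl fun k hk => ?_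
        have hsub : n + 1 - (k + 1) = n - k := by omega
        rw [map_smul, map_smul, hpd (k + 1) (by omega), hsub]
        simp only [Nat.add_sub_cancel]
        have key : (((n + 1).choose (k + 1) : K)) * ((k + 1 : ℕ) : K) =
            ((n + 1 : ℕ) : K) * (n.choose k : K) := by
          rw [← Nat.cast_mul, ← Nat.cast_mul, mul_comm ((n+1 : ℕ)) _,
            ← Nat.add_one_mul_choose_eq]
          push_cast
          ring
        simp only [smul_smul]
        congr 1
        push_cast at key ⊢
        linear_combination eval y (p (n - k)) * key
      rw [h1, h2, sub_self]
    have hF0 : ((p (n + 1)).comp (X + C y) - S).eval 0 = 0 := by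
      rw [eval_sub]
      have e1 : ((p (n + 1)).comp (X + C y)).eval 0 = (p (n + 1)).eval y := by
        rw [eval_comp]; simp
      have e2 : S.eval 0 = (p (n + 1)).eval y := by
        rw [hS, eval_finset_sum, Finset.sum_range_succ']
        have t0 : ((((n + 1).choose 0 : K)) • ((p (n + 1 - 0)).eval y • p 0)).eval 0 =
            (p (n + 1)).eval y := by
          simp [hp0]
        rw [t0]
        have tsum : ∑ k ∈ Finset.range (n + 1),
            ((((n + 1).choose (k + 1) : K)) • ((p (n + 1 - (k + 1))).eval y • p (k + 1))).eval 0
            = 0 := by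
          refine Finset.sum_eq_zero fun k hk => ?_
          simp [hpe (k + 1) (by omega)]
        rw [tsum, zero_add]
      rw [e1, e2, sub_self]
    have hF := ker_zero ⟨hshift, c, hc, hdX⟩ _ hdF hF0
    have := sub_eq_zero.mp hF
    rw [this]
end

section
/- Given a delta operator 𝔡 with basic sequence (p_n) and shift-invariant operators Φ_i = Σ_{j≥0} a_j^{(i)} 𝔡^{i+j} with a_0^{(i)} ≠ 0 for each i, there exists a unique sequence (f_n)_{n≥0} of polynomials with deg f_n = n and ε_0(Φ_i(f_n)) = n!·δ_{i,n} for all i, n ∈ ℕ. -/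
open Polynomial

set_option linter.unusedSectionVars false
section Aux

variable {K : Type*} [Field K] [CharZero K] {d : Module.End K (Polynomial K)}

theorem shiftOp_apply' (a : K) (f : Polynomial K) : shiftOp K a f = taylor a f := by
  simp [shiftOp, taylor_apply, Polynomial.comp, aeval_def, Polynomial.algebraMap_eq]

theorem aux_d_C (hsi : IsShiftInvariant d) {c : K} (hdX : d X = C c) (e : K) :
    d (C e) = 0 := by
  have h := LinearMap.congr_fun (hsi e) X
  simp only [LinearMap.comp_apply, shiftOp_apply', taylor_X, map_add, hdX, taylor_C] at h
  rwa [add_eq_left] at h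

theorem aux_d_taylor (hsi : IsShiftInvariant d) (a : K) (q : Polynomial K) :
    d (taylor a q) = taylor a (d q) := by
  have h := LinearMap.congr_fun (hsi a) q
  simpa only [LinearMap.comp_apply, shiftOp_apply'] using h

theorem aux_taylor_eq_sum (x : K) (q : Polynomial K) (N : ℕ) (hN : q.natDegree ≤ N) :
    taylor x q = ∑ i ∈ Finset.range (N + 1), x ^ i • hasseDeriv i q := by
  ext m
  rw [taylor_coeff, finset_sum_coeff,
    eval_eq_sum_range' (lt_of_le_of_lt ((natDegree_hasseDeriv_le q m).trans
      (le_trans (Nat.sub_le _ _) hN)) (Nat.lt_succ_self N)) x]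
  refine Finset.sum_congr rfl fun i _ => ?_
  rw [coeff_smul, hasseDeriv_coeff, hasseDeriv_coeff, smul_eq_mul]
  have h1 : (i + m).choose m = (m + i).choose i := by
    rw [Nat.add_comm]; exact Nat.choose_symm_add
  rw [h1, Nat.add_comm i m]
  ring

theorem aux_vanish_s3 (M : ℕ) (v : ℕ → Polynomial K)
    (h : ∀ x : K, ∑ i ∈ Finset.range M, x ^ i • v i = 0) :
    ∀ i, i < M → v i = 0 := by
  have hP : (∑ i ∈ Finset.range M,
      Polynomial.C (v i) * Polynomial.X ^ i : Polynomial (Polynomial K)) = 0 := by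
    apply eq_zero_of_infinite_isRoot
    apply Set.Infinite.mono (s := Set.range (fun a : K => (Polynomial.C a : Polynomial K)))
    · rintro _ ⟨a, rfl⟩
      show IsRoot _ _
      rw [IsRoot, eval_finset_sum]
      rw [← h a]
      refine Finset.sum_congr rfl fun i _ => ?_
      rw [eval_mul, eval_C, eval_pow, eval_X, ← Polynomial.C_pow, mul_comm, ← smul_eq_C_mul]
    · exact Set.infinite_range_of_injective Polynomial.C_injective
  intro i hi
  have h2 := congrArg (fun P => Polynomial.coeff P i) hP
  simp only [finset_sum_coeff, coeff_C_mul, coeff_X_pow, coeff_zero, mul_ite, mul_one,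
    mul_zero] at h2
  rwa [Finset.sum_ite_eq (Finset.range M) i v, if_pos (Finset.mem_range.mpr hi)] at h2


theorem aux_d_derivative (hsi : IsShiftInvariant d) (q : Polynomial K) :
    d (derivative q) = derivative (d q) := by
  set M := q.natDegree + (d q).natDegree + 2 with hM
  have key : ∀ x : K,
      ∑ i ∈ Finset.range M, x ^ i • (d (hasseDeriv i q) - hasseDeriv i (d q)) = 0 := by
    intro x
    have h1 : taylor x q = ∑ i ∈ Finset.range M, x ^ i • hasseDeriv i q := by
      have h := aux_taylor_eq_sum x q (M - 1) (by omega)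
      rwa [show M - 1 + 1 = M by omega] at h
    have h2 : taylor x (d q) = ∑ i ∈ Finset.range M, x ^ i • hasseDeriv i (d q) := by
      have h := aux_taylor_eq_sum x (d q) (M - 1) (by omega)
      rwa [show M - 1 + 1 = M by omega] at h
    have h3 := aux_d_taylor hsi x q
    rw [h1, h2, map_sum] at h3
    simp only [map_smul] at h3
    simp only [smul_sub, Finset.sum_sub_distrib, h3, sub_self]
  have h4 := aux_vanish_s3 M _ key 1 (by omega)
  have h5 : d (hasseDeriv 1 q) = hasseDeriv 1 (d q) := sub_eq_zero.mp h4
  rwa [hasseDeriv_one', hasseDeriv_one'] at h5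

theorem aux_deg (hsi : IsShiftInvariant d) {c : K} (hc : c ≠ 0) (hdX : d X = C c) :
    ∀ n : ℕ, ∀ q : Polynomial K, q.natDegree = n + 1 → d q ≠ 0 ∧ (d q).natDegree = n := by
  intro n
  induction n with
  | zero =>
    intro q hq
    have hq1 : q = C (q.coeff 1) * X + C (q.coeff 0) :=
      eq_X_add_C_of_natDegree_le_one (by omega)
    have hcoeff : q.coeff 1 ≠ 0 := by
      have h : q.leadingCoeff ≠ 0 := leadingCoeff_ne_zero.mpr (fun h0 => by simp [h0] at hq)
      rwa [leadingCoeff, hq] at h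
    have hdq : d q = C (q.coeff 1 * c) := by
      conv_lhs => rw [hq1]
      rw [← smul_eq_C_mul, map_add, map_smul, hdX, aux_d_C hsi hdX, add_zero, smul_C,
        smul_eq_mul]
    rw [hdq]
    exact ⟨fun h0 => (mul_ne_zero hcoeff hc) (C_injective (by rwa [map_zero])),
      natDegree_C _⟩
  | succ n IH =>
    intro q hq
    have hd1 : (derivative q).natDegree = n + 1 := by
      have h := degree_derivative_eq q (by omega)
      rw [hq] at h
      exact natDegree_eq_of_degree_eq_some (by rw [h]; norm_num)
    obtain ⟨hne, hdeg⟩ := IH (derivative q) hd1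
    have hcomm : derivative (d q) = d (derivative q) := (aux_d_derivative hsi q).symm
    have h4 : derivative (d q) ≠ 0 := by rw [hcomm]; exact hne
    have h5 : (d q).natDegree ≠ 0 := fun h0 =>
      h4 (by rw [eq_C_of_natDegree_eq_zero h0]; exact derivative_C)
    refine ⟨fun h0 => h4 (by rw [h0, derivative_zero]), ?_⟩
    have h6 := degree_derivative_eq (d q) (by omega)
    have h7 : (derivative (d q)).degree = (n : ℕ) := by
      rw [hcomm, degree_eq_natDegree hne, hdeg]
    rw [h6] at h7
    have h8 : (d q).natDegree - 1 = n := by exact_mod_cast h7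
    omega

theorem aux_pow (hsi : IsShiftInvariant d) {c : K} (hc : c ≠ 0) (hdX : d X = C c) :
    ∀ m : ℕ, ∀ q : Polynomial K, q ≠ 0 → m ≤ q.natDegree →
      (d ^ m) q ≠ 0 ∧ ((d ^ m) q).natDegree = q.natDegree - m := by
  intro m
  induction m with
  | zero => intro q hq _; simpa using hq
  | succ m IH =>
    intro q hq hm
    obtain ⟨k, hk⟩ : ∃ k, q.natDegree = k + 1 := ⟨q.natDegree - 1, by omega⟩
    obtain ⟨h1, h2⟩ := aux_deg hsi hc hdX k q hk
    have h3 := IH (d q) h1 (by omega)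
    have h4 : (d ^ (m + 1)) q = (d ^ m) (d q) := by rw [pow_succ]; rfl
    rw [h4]
    exact ⟨h3.1, by rw [h3.2, h2]; omega⟩

theorem aux_pow_zero (hsi : IsShiftInvariant d) {c : K} (hc : c ≠ 0) (hdX : d X = C c) :
    ∀ (q : Polynomial K) (m : ℕ), q.natDegree < m → (d ^ m) q = 0 := by
  intro q m hm
  by_cases hq : q = 0
  · simp [hq]
  obtain ⟨h1, h2⟩ := aux_pow hsi hc hdX q.natDegree q hq le_rfl
  have h3 : d ((d ^ q.natDegree) q) = 0 := by
    rw [eq_C_of_natDegree_eq_zero (by omega : ((d ^ q.natDegree) q).natDegree = 0)]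
    exact aux_d_C hsi hdX _
  obtain ⟨r, hr⟩ : ∃ r, m = r + 1 + q.natDegree := ⟨m - 1 - q.natDegree, by omega⟩
  calc (d ^ m) q = (d ^ r) (d ((d ^ q.natDegree) q)) := by
        rw [hr, pow_add, pow_add, pow_one]; rfl
    _ = 0 := by rw [h3, map_zero]


theorem aux_p_deg (hsi : IsShiftInvariant d) {c : K} (hc : c ≠ 0) (hdX : d X = C c)
    {p : ℕ → Polynomial K} (hp0 : p 0 = 1)
    (hpd : ∀ n, 1 ≤ n → d (p n) = (n : K) • p (n - 1)) :
    ∀ n, p n ≠ 0 ∧ (p n).natDegree = n := by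
  intro n
  induction n with
  | zero => rw [hp0]; exact ⟨one_ne_zero, natDegree_one⟩
  | succ n IH =>
    have hdp : d (p (n + 1)) = ((n + 1 : ℕ) : K) • p n := by
      have h := hpd (n + 1) (by omega)
      simpa using h
    have hne : ((n + 1 : ℕ) : K) • p n ≠ 0 :=
      smul_ne_zero (by exact_mod_cast Nat.succ_ne_zero n) IH.1
    have hpne : p (n + 1) ≠ 0 := fun h => hne (by rw [← hdp, h, map_zero])
    have hnd0 : (p (n + 1)).natDegree ≠ 0 := fun h0 =>
      hne (by rw [← hdp, eq_C_of_natDegree_eq_zero h0, aux_d_C hsi hdX])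
    obtain ⟨k, hk⟩ : ∃ k, (p (n + 1)).natDegree = k + 1 :=
      ⟨(p (n + 1)).natDegree - 1, by omega⟩
    have h1 := (aux_deg hsi hc hdX k (p (n + 1)) hk).2
    have h2 : (((n + 1 : ℕ) : K) • p n).natDegree = (p n).natDegree := by
      rw [smul_eq_C_mul]
      exact natDegree_C_mul_eq_of_mul_eq_one
        (inv_mul_cancel₀ (by exact_mod_cast Nat.succ_ne_zero n))
    rw [hdp, h2, IH.2] at h1
    refine ⟨hpne, by omega⟩

theorem aux_pow_p {p : ℕ → Polynomial K}
    (hpd : ∀ n, 1 ≤ n → d (p n) = (n : K) • p (n - 1)) :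
    ∀ m k, m ≤ k → (d ^ m) (p k) = ((k.descFactorial m : ℕ) : K) • p (k - m) := by
  intro m
  induction m with
  | zero => intro k _; simp
  | succ m IH =>
    intro k hm
    obtain ⟨t, rfl⟩ : ∃ t, k = t + 1 := ⟨k - 1, by omega⟩
    have h1 : (d ^ (m + 1)) (p (t + 1)) = (d ^ m) (d (p (t + 1))) := by rw [pow_succ]; rfl
    have h2 : d (p (t + 1)) = ((t + 1 : ℕ) : K) • p t := by
      have h := hpd (t + 1) (by omega)
      simpa using h
    rw [h1, h2, map_smul, IH t (by omega), smul_smul]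
    have h3 : t + 1 - (m + 1) = t - m := by omega
    rw [h3, ← Nat.cast_mul, ← Nat.succ_descFactorial_succ]

theorem aux_eval (hsi : IsShiftInvariant d) {c : K} (hc : c ≠ 0) (hdX : d X = C c)
    {p : ℕ → Polynomial K} (hp0 : p 0 = 1) (hpe : ∀ n, 1 ≤ n → (p n).eval 0 = 0)
    (hpd : ∀ n, 1 ≤ n → d (p n) = (n : K) • p (n - 1)) :
    ∀ m k, ((d ^ m) (p k)).eval 0 = if m = k then (k.factorial : K) else 0 := by
  intro m k
  rcases lt_trichotomy m k with h | h | h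
  · rw [aux_pow_p hpd m k h.le, eval_smul, hpe (k - m) (by omega), smul_zero,
      if_neg (by omega)]
  · subst h
    rw [aux_pow_p hpd m m le_rfl, Nat.sub_self, hp0, if_pos rfl, Nat.descFactorial_self]
    simp
  · rw [aux_pow_zero hsi hc hdX (p k) m (by rw [(aux_p_deg hsi hc hdX hp0 hpd k).2]; omega),
      eval_zero, if_neg (by omega)]

end Aux

theorem stmt3 {K : Type*} [Field K] [CharZero K] (d : Module.End K (Polynomial K))
    (hd : IsDeltaOperator d) (p : ℕ → Polynomial K) (hp : IsBasicSequence d p)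
    (a : ℕ → ℕ → K) (ha : ∀ i, a i 0 ≠ 0) :
    ∃! f : ℕ → Polynomial K, ∀ n, (f n).natDegree = n ∧
      ∀ i, (∑ j ∈ Finset.range (n + 1), a i j • (d ^ (i + j)) (f n)).eval 0 =
        if i = n then (n.factorial : K) else 0 := by
  obtain ⟨hsi, c, hc, hdX⟩ := hd
  obtain ⟨hp0, hpe, hpd⟩ := hp
  have hpz := aux_pow_zero hsi hc hdX
  have hpow := aux_pow hsi hc hdX
  have hpdg := aux_p_deg hsi hc hdX hp0 hpd
  have heval := aux_eval hsi hc hdX hp0 hpe hpd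
  -- truncation lemma
  have trunc : ∀ (i m n : ℕ) (g : Polynomial K), g.natDegree ≤ m → m ≤ n →
      (∑ j ∈ Finset.range (n + 1), a i j • (d ^ (i + j)) g) =
        ∑ j ∈ Finset.range (m + 1), a i j • (d ^ (i + j)) g := by
    intro i m n g hg hmn
    symm
    apply Finset.sum_subset (Finset.range_subset_range.mpr (by omega))
    intro j hj hj2
    simp only [Finset.mem_range] at hj hj2
    rw [hpz g (i + j) (by omega), smul_zero]
  -- uniqueness for a single degree
  have uniq : ∀ (n : ℕ) (f g : Polynomial K),
      (f.natDegree = n ∧ ∀ i, (∑ j ∈ Finset.range (n + 1),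
        a i j • (d ^ (i + j)) f).eval 0 = if i = n then (n.factorial : K) else 0) →
      (g.natDegree = n ∧ ∀ i, (∑ j ∈ Finset.range (n + 1),
        a i j • (d ^ (i + j)) g).eval 0 = if i = n then (n.factorial : K) else 0) →
      f = g := by
    rintro n f g ⟨hf1, hf2⟩ ⟨hg1, hg2⟩
    by_contra hne
    have hh0 : f - g ≠ 0 := sub_ne_zero.mpr hne
    set m := (f - g).natDegree with hm
    have hhd : m ≤ n := by
      have := natDegree_sub_le_of_le hf1.le hg1.le
      simpa using this
    have key : (∑ j ∈ Finset.range (n + 1), a m j • (d ^ (m + j)) (f - g)).eval 0 = 0 := by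
      have he : ∀ j : ℕ, (d ^ (m + j)) (f - g) = (d ^ (m + j)) f - (d ^ (m + j)) g :=
        fun j => map_sub _ _ _
      simp only [he, smul_sub, Finset.sum_sub_distrib, eval_sub, hf2 m, hg2 m, sub_self]
    obtain ⟨h1, h2⟩ := hpow m (f - g) hh0 le_rfl
    have h3 : ((d ^ m) (f - g)).eval 0 ≠ 0 := by
      intro h0
      apply h1
      have h4 := eq_C_of_natDegree_eq_zero (by omega : ((d ^ m) (f - g)).natDegree = 0)
      rw [h4, eval_C] at h0
      rw [h4, h0, map_zero]
    have h5 : (∑ j ∈ Finset.range (n + 1), a m j • (d ^ (m + j)) (f - g)).eval 0 =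
        a m 0 * ((d ^ m) (f - g)).eval 0 := by
      rw [eval_finset_sum]
      rw [Finset.sum_eq_single 0]
      · rw [Nat.add_zero, eval_smul, smul_eq_mul]
      · intro j hj hj0
        rw [hpz (f - g) (m + j) (by omega), smul_zero, eval_zero]
      · intro habs; exact absurd (Finset.mem_range.mpr (by omega)) habs
    rw [h5] at key
    exact h3 ((mul_eq_zero.mp key).resolve_left (ha m))
  -- existence for a single degree
  have exist : ∀ n : ℕ, ∃ f : Polynomial K, f.natDegree = n ∧
      ∀ i, (∑ j ∈ Finset.range (n + 1), a i j • (d ^ (i + j)) f).eval 0 =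
        if i = n then (n.factorial : K) else 0 := by
    intro n
    induction n using Nat.strong_induction_on with
    | _ n IH =>
    have IH2 : ∀ m : ℕ, ∃ g : Polynomial K, m < n →
        g.natDegree = m ∧ ∀ i, (∑ j ∈ Finset.range (m + 1),
          a i j • (d ^ (i + j)) g).eval 0 = if i = m then (m.factorial : K) else 0 := by
      intro m
      by_cases hm : m < n
      · exact ⟨(IH m hm).choose, fun _ => (IH m hm).choose_spec⟩
      · exact ⟨0, fun h => absurd h hm⟩
    choose Fm hF using IH2
    set q : Polynomial K := (a n 0)⁻¹ • p n with hq
    have hqd : q.natDegree = n := by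
      rw [hq, smul_eq_C_mul, natDegree_C_mul_eq_of_mul_eq_one (mul_inv_cancel₀ (ha n))]
      exact (hpdg n).2
    set b : ℕ → K := fun i =>
      (∑ j ∈ Finset.range (n + 1), a i j • (d ^ (i + j)) q).eval 0 with hb
    set f₀ : Polynomial K :=
      q - ∑ m ∈ Finset.range n, (b m / (m.factorial : K)) • Fm m with hf₀
    have hfd : f₀.natDegree = n := by
      by_cases hn : n = 0
      · subst hn
        simp only [hf₀, Finset.range_zero, Finset.sum_empty, sub_zero]
        exact hqd
      · have hs : (∑ m ∈ Finset.range n, (b m / (m.factorial : K)) • Fm m).natDegree < n := by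
          apply lt_of_le_of_lt (natDegree_sum_le_of_forall_le _ _ ?_)
            (show n - 1 < n by omega)
          intro m hm
          simp only [Finset.mem_range] at hm
          exact le_trans (natDegree_smul_le _ _) (by rw [(hF m hm).1]; omega)
        rw [hf₀, natDegree_sub_eq_left_of_natDegree_lt (by rw [hqd]; exact hs), hqd]
    have hbn : b n = (n.factorial : K) := by
      rw [hb]
      simp only
      rw [eval_finset_sum, Finset.sum_eq_single 0]
      · rw [Nat.add_zero, hq, map_smul, smul_smul, mul_inv_cancel₀ (ha n), one_smul]
        simp [heval n n]
      · intro j hj hj0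
        rw [hpz q (n + j) (by omega), smul_zero, eval_zero]
      · intro habs; exact absurd (Finset.mem_range.mpr (by omega)) habs
    refine ⟨f₀, hfd, ?_⟩
    intro i
    by_cases hin : n < i
    · rw [if_neg (by omega), eval_finset_sum]
      apply Finset.sum_eq_zero
      intro j hj
      rw [hpz f₀ (i + j) (by omega), smul_zero, eval_zero]
    · have hmain : (∑ j ∈ Finset.range (n + 1), a i j • (d ^ (i + j)) f₀).eval 0 =
          b i - ∑ m ∈ Finset.range n,
            (b m / (m.factorial : K)) * (if i = m then (m.factorial : K) else 0) := by
        have e1 : ∀ j, (d ^ (i + j)) f₀ = (d ^ (i + j)) q -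
            ∑ m ∈ Finset.range n, (b m / (m.factorial : K)) • (d ^ (i + j)) (Fm m) := by
          intro j
          rw [hf₀, map_sub, map_sum]
          congr 1
          exact Finset.sum_congr rfl fun m _ => map_smul _ _ _
        simp only [e1, smul_sub, Finset.sum_sub_distrib, eval_sub]
        congr 1
        simp only [Finset.smul_sum]
        rw [Finset.sum_comm, eval_finset_sum]
        apply Finset.sum_congr rfl
        intro m hm
        simp only [Finset.mem_range] at hm
        have e2 : ∀ j, a i j • (b m / (m.factorial : K)) • (d ^ (i + j)) (Fm m) =
            (b m / (m.factorial : K)) • (a i j • (d ^ (i + j)) (Fm m)) :=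
          fun j => smul_comm _ _ _
        simp only [e2, ← Finset.smul_sum, eval_smul, smul_eq_mul]
        congr 1
        rw [trunc i m n (Fm m) (by rw [(hF m hm).1]) (by omega)]
        exact (hF m hm).2 i
      rw [hmain]
      by_cases hin' : i = n
      · subst hin'
        rw [if_pos rfl]
        rw [Finset.sum_eq_zero, sub_zero]
        · exact hbn
        · intro m hm
          simp only [Finset.mem_range] at hm
          rw [if_neg (by omega), mul_zero]
      · rw [if_neg hin']
        rw [Finset.sum_eq_single i]
        · rw [if_pos rfl, div_mul_cancel₀ _ (by exact_mod_cast i.factorial_ne_zero), sub_self]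
        · intro m hm hmi
          rw [if_neg (fun h => hmi h.symm), mul_zero]
        · intro habs; exact absurd (Finset.mem_range.mpr (by omega)) habs
  refine ⟨fun n => (exist n).choose, fun n => (exist n).choose_spec, ?_⟩
  intro g hg
  funext n
  exact uniq n (g n) ((exist n).choose) (hg n) ((exist n).choose_spec)
end

section
/- Let (t_n) be the generalized Gončarov basis for (𝔡, Z). For fixed j ∈ ℕ define t_n^{(j)}(x) := 𝔡^j(t_{n+j})(x) / ((n+j)(n+j−1)⋯(n+1)). Then (t_n^{(j)})_{n≥0} is the generalized Gončarov basis for (𝔡, Z^{(j)}), where Z^{(j)} = (z_{i+j})_{i≥0}. In particular 𝔡^j(t_n) = n(n−1)⋯(n−j+1) · t_{n−j}^{(j)} for n ≥ j. -/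
set_option linter.unusedSectionVars false
set_option maxHeartbeats 1000000


open Polynomial

section Aux
variable {K : Type*} [Field K] [CharZero K] {d : Module.End K (Polynomial K)}

lemma shiftOp_eq_taylor (a : K) (p : Polynomial K) : shiftOp K a p = taylor a p := by
  simp [shiftOp, taylor_apply, aeval_def, comp]

lemma dC (hd : IsDeltaOperator d) (a : K) : d (C a) = 0 := by
  obtain ⟨hsi, c, hc, hdX⟩ := hd
  have h := LinearMap.congr_fun (hsi a) X
  simp [shiftOp, hdX, map_add] at h
  simpa [hdX] using h

lemma taylor_d_pow (hd : IsDeltaOperator d) (a : K) (n : ℕ) :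
    taylor a (d (X ^ n)) = ∑ k ∈ Finset.range (n + 1),
      (a ^ (n - k) * (n.choose k : K)) • d (X ^ k) := by
  have h := LinearMap.congr_fun (hd.1 a) (X ^ n)
  simp only [LinearMap.comp_apply] at h
  have h1 : shiftOp K a ((X : Polynomial K) ^ n) = (X + C a) ^ n := by
    simp [shiftOp]
  have h2 : ((X + C a) ^ n : Polynomial K)
      = ∑ k ∈ Finset.range (n + 1), (a ^ (n - k) * (n.choose k : K)) • X ^ k := by
    rw [add_pow]
    refine Finset.sum_congr rfl fun k _ => ?_
    rw [smul_eq_C_mul, map_mul, map_pow, C_eq_natCast]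
    ring
  rw [← shiftOp_eq_taylor, ← h, h1, h2, map_sum]
  simp only [map_smul]

lemma d_pow_deg (hd : IsDeltaOperator d) {c : K} (hc : c ≠ 0) (hdX : d X = C c) :
    ∀ n : ℕ, 1 ≤ n → (d (X ^ n)).natDegree ≤ n - 1 ∧ (d (X ^ n)).coeff (n - 1) = n * c := by
  intro n
  induction n using Nat.strong_induction_on with
  | _ n IH =>
  intro hn
  set q := d (X ^ n) with hq
  have hident : taylor (1 : K) q - q
      = ∑ k ∈ Finset.range n, ((n.choose k : K)) • d (X ^ k) := by
    have h := taylor_d_pow hd (1 : K) n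
    rw [Finset.sum_range_succ] at h
    simp only [one_pow, one_mul, Nat.choose_self, Nat.cast_one, one_smul] at h
    rw [← hq] at h
    rw [h, add_sub_cancel_right]
  have hzero : d ((X : Polynomial K) ^ 0) = 0 := by
    rw [pow_zero, ← C_1, dC hd]
  have hub : q.natDegree ≤ n - 1 := by
    by_contra hub
    push_neg at hub
    set m := q.natDegree with hm
    have hm1 : n ≤ m := by omega
    have hL : (taylor (1 : K) q - q).coeff (m - 1) = (m : K) * q.coeff m := by
      have hdeg : (hasseDeriv (m - 1) q).natDegree < 2 := by
        have h1 := natDegree_hasseDeriv_le q (m - 1)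
        omega
      have e1 : 1 + (m - 1) = m := by omega
      have e2 : m.choose (m - 1) = m := by
        rw [Nat.choose_symm (by omega : 1 ≤ m), Nat.choose_one_right]
      rw [coeff_sub, taylor_coeff, eval_eq_sum_range' hdeg]
      simp only [Finset.sum_range_succ, Finset.sum_range_one, hasseDeriv_coeff, zero_add, e1,
        Nat.choose_self, Nat.cast_one, one_mul, one_pow, mul_one, e2]
      ring
    have hR : (∑ k ∈ Finset.range n, ((n.choose k : K)) • d (X ^ k)).coeff (m - 1) = 0 := by
      rw [finset_sum_coeff]
      refine Finset.sum_eq_zero fun k hk => ?_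
      rw [coeff_smul]
      rcases Nat.eq_zero_or_pos k with h0 | h1
      · subst h0; rw [hzero]; simp
      · have hdk := (IH k (Finset.mem_range.mp hk) h1).1
        rw [coeff_eq_zero_of_natDegree_lt
          (lt_of_le_of_lt hdk (by have := Finset.mem_range.mp hk; omega)), smul_zero]
    rw [hident, hR] at hL
    have hqm : q.coeff m = 0 :=
      (mul_eq_zero.mp hL.symm).resolve_left (Nat.cast_ne_zero.mpr (by omega))
    have hq0 : q ≠ 0 := by
      intro h0
      rw [h0] at hm
      simp at hm
      omega
    exact (leadingCoeff_ne_zero.mpr hq0) hqm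
  refine ⟨hub, ?_⟩
  rcases eq_or_lt_of_le hn with h1 | h2
  · subst h1
    simp [hq, pow_one, hdX]
  · -- n ≥ 2
    have hL : (taylor (1 : K) q - q).coeff (n - 2) = ((n - 1 : ℕ) : K) * q.coeff (n - 1) := by
      have hdeg : (hasseDeriv (n - 2) q).natDegree < 2 := by
        have h1 := natDegree_hasseDeriv_le q (n - 2)
        omega
      have e1 : 1 + (n - 2) = n - 1 := by omega
      have e2 : (n - 1).choose (n - 2) = n - 1 := by
        have : n - 2 = (n - 1) - 1 := by omega
        rw [this, Nat.choose_symm (by omega : 1 ≤ n - 1), Nat.choose_one_right]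
      rw [coeff_sub, taylor_coeff, eval_eq_sum_range' hdeg]
      simp only [Finset.sum_range_succ, Finset.sum_range_one, hasseDeriv_coeff, zero_add, e1,
        Nat.choose_self, Nat.cast_one, one_mul, one_pow, mul_one, e2]
      ring
    have hR : (∑ k ∈ Finset.range n, ((n.choose k : K)) • d (X ^ k)).coeff (n - 2)
        = (n : K) * (((n - 1 : ℕ) : K) * c) := by
      rw [finset_sum_coeff]
      rw [Finset.sum_eq_single (n - 1)]
      · have hnn : n.choose (n - 1) = n := by
          rw [Nat.choose_symm (by omega : 1 ≤ n), Nat.choose_one_right]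
        have hco := (IH (n - 1) (by omega) (by omega)).2
        rw [show n - 1 - 1 = n - 2 by omega] at hco
        rw [coeff_smul, hco, hnn, smul_eq_mul]
      · intro k hk hkn
        rw [coeff_smul]
        rcases Nat.eq_zero_or_pos k with h0 | hk1
        · subst h0; rw [hzero]; simp
        · have hdk := (IH k (Finset.mem_range.mp hk) hk1).1
          rw [coeff_eq_zero_of_natDegree_lt
            (lt_of_le_of_lt hdk (by have := Finset.mem_range.mp hk; omega)), smul_zero]
      · intro h; exact absurd (Finset.mem_range.mpr (by omega)) h
    rw [hident, hR] at hL
    have hne : ((n - 1 : ℕ) : K) ≠ 0 := Nat.cast_ne_zero.mpr (by omega)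
    exact mul_left_cancel₀ hne (hL.symm.trans (by ring))

lemma d_deg (hd : IsDeltaOperator d) {p : Polynomial K} (hp : 1 ≤ p.natDegree) :
    (d p).natDegree = p.natDegree - 1 ∧ d p ≠ 0 := by
  obtain ⟨c, hc, hdX⟩ := hd.2
  set m := p.natDegree with hm
  have hrep : p = ∑ k ∈ Finset.range (m + 1), p.coeff k • X ^ k := by
    conv_lhs => rw [p.as_sum_range' (m + 1) (by omega)]
    exact Finset.sum_congr rfl fun k _ => (smul_X_eq_monomial).symm
  have hdp : d p = ∑ k ∈ Finset.range (m + 1), p.coeff k • d (X ^ k) := by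
    conv_lhs => rw [hrep]
    rw [map_sum]
    exact Finset.sum_congr rfl fun k _ => map_smul d _ _
  have hzero : d ((X : Polynomial K) ^ 0) = 0 := by
    rw [pow_zero, ← C_1, dC hd]
  have hub : (d p).natDegree ≤ m - 1 := by
    rw [natDegree_le_iff_coeff_eq_zero]
    intro N hN
    rw [hdp, finset_sum_coeff]
    refine Finset.sum_eq_zero fun k hk => ?_
    rw [coeff_smul]
    rcases Nat.eq_zero_or_pos k with h0 | h1
    · subst h0; rw [hzero]; simp
    · have hdk := (d_pow_deg hd hc hdX k h1).1
      rw [coeff_eq_zero_of_natDegree_lt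
        (lt_of_le_of_lt hdk (by have := Finset.mem_range.mp hk; omega)), smul_zero]
  have hco : (d p).coeff (m - 1) = p.coeff m * ((m : K) * c) := by
    rw [hdp, finset_sum_coeff, Finset.sum_eq_single m]
    · rw [coeff_smul, (d_pow_deg hd hc hdX m (by omega)).2, smul_eq_mul]
    · intro k hk hkm
      rw [coeff_smul]
      rcases Nat.eq_zero_or_pos k with h0 | h1
      · subst h0; rw [hzero]; simp
      · have hdk := (d_pow_deg hd hc hdX k h1).1
        rw [coeff_eq_zero_of_natDegree_lt
          (lt_of_le_of_lt hdk (by have := Finset.mem_range.mp hk; omega)), smul_zero]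
    · intro h; exact absurd (Finset.self_mem_range_succ m) h
  have hp0 : p ≠ 0 := fun h0 => by simp [h0] at hm; omega
  have hne : (d p).coeff (m - 1) ≠ 0 := by
    rw [hco]
    exact mul_ne_zero (by rw [hm]; exact leadingCoeff_ne_zero.mpr hp0)
      (mul_ne_zero (Nat.cast_ne_zero.mpr (by omega)) hc)
  have hlb := le_natDegree_of_ne_zero hne
  exact ⟨le_antisymm hub hlb, fun h0 => hne (by rw [h0]; simp)⟩

lemma d_pow_natDegree (hd : IsDeltaOperator d) (j : ℕ) :
    ∀ p : Polynomial K, j ≤ p.natDegree → ((d ^ j) p).natDegree = p.natDegree - j := by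
  induction j with
  | zero => intro p _; simp
  | succ j IH =>
    intro p hp
    rw [pow_succ, Module.End.mul_apply]
    have h1 := (d_deg hd (by omega : 1 ≤ p.natDegree)).1
    rw [IH (d p) (by omega)]
    omega

end Aux

theorem stmt6 {K : Type*} [Field K] [CharZero K] (d : Module.End K (Polynomial K))
    (hd : IsDeltaOperator d) (z : ℕ → K) (t : ℕ → Polynomial K)
    (ht : IsGoncarovBasis d z t) (j : ℕ) :
    IsGoncarovBasis d (fun i => z (i + j))
      (fun n => ((n.factorial : K) / ((n + j).factorial : K)) • (d ^ j) (t (n + j))) ∧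
    ∀ n, j ≤ n → (d ^ j) (t n) =
      (n.descFactorial j : K) •
        (((n - j).factorial : K) / (((n - j) + j).factorial : K)) •
          (d ^ j) (t ((n - j) + j)) := by
  have hfac : ∀ m : ℕ, ((m.factorial : K)) ≠ 0 :=
    fun m => Nat.cast_ne_zero.mpr m.factorial_ne_zero
  constructor
  · intro n
    simp only []
    constructor
    · have h1 : ((d ^ j) (t (n + j))).natDegree = n := by
        rw [d_pow_natDegree hd j (t (n + j)) (by rw [(ht (n + j)).1]; omega), (ht (n + j)).1]
        omega
      rw [smul_eq_C_mul, natDegree_C_mul (div_ne_zero (hfac n) (hfac (n + j))), h1]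
    · intro i
      rw [map_smul, ← Module.End.mul_apply, ← pow_add, smul_eq_C_mul, eval_mul, eval_C,
        (ht (n + j)).2 (i + j)]
      by_cases hin : i = n
      · subst hin
        rw [if_pos rfl, if_pos rfl]
        exact div_mul_cancel₀ _ (hfac _)
      · rw [if_neg (by omega), if_neg hin, mul_zero]
  · intro n hn
    have h1 : n - j + j = n := Nat.sub_add_cancel hn
    rw [h1, smul_smul]
    have h3 : ((n - j).factorial * n.descFactorial j : ℕ) = n.factorial :=
      Nat.factorial_mul_descFactorial hn
    have h3' : (n.descFactorial j * (n - j).factorial : ℕ) = n.factorial := by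
      rw [mul_comm]; exact h3
    have h2 : (n.descFactorial j : K) * (((n - j).factorial : K) / ((n.factorial : K))) = 1 := by
      rw [mul_div_assoc', div_eq_one_iff_eq (hfac n)]
      exact_mod_cast h3'
    rw [h2, one_smul]
end

section
/- Fix ξ ∈ K and let W = (z_i + iξ)_{i≥0}. Then the generalized Gončarov basis associated with (𝔡, W) coincides with the generalized Gončarov basis associated with (E_ξ ∘ 𝔡, Z), where E_ξ is the shift operator by ξ. -/
open Polynomial

lemma shiftOp_eval {K : Type*} [Field K] (a : K) (f : Polynomial K) (x : K) :
    (shiftOp K a f).eval x = f.eval (x + a) := by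
  have : shiftOp K a f = f.comp (X + C a) := rfl
  simp [this, eval_comp]

lemma shiftOp_comp {K : Type*} [Field K] (a b : K) :
    shiftOp K a ∘ₗ shiftOp K b = shiftOp K (a + b) := by
  apply LinearMap.ext; intro f
  have h1 : ∀ c (g : Polynomial K), shiftOp K c g = g.comp (X + C c) := fun _ _ => rfl
  simp only [LinearMap.comp_apply, h1, comp_assoc]
  congr 1
  simp [add_comp, add_assoc, C_add]

lemma pow_comm_shift {K : Type*} [Field K] (d : Module.End K (Polynomial K))
    (hd : IsShiftInvariant d) (ξ : K) (n : ℕ) :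
    (d ^ n) ∘ₗ shiftOp K ξ = shiftOp K ξ ∘ₗ d ^ n := by
  induction n with
  | zero => simp [Module.End.one_eq_id]
  | succ m ihm =>
    rw [pow_succ, Module.End.mul_eq_comp, LinearMap.comp_assoc, hd ξ,
      ← LinearMap.comp_assoc, ihm, LinearMap.comp_assoc]

lemma pow_shift {K : Type*} [Field K] (d : Module.End K (Polynomial K))
    (hd : IsShiftInvariant d) (ξ : K) (i : ℕ) :
    (shiftOp K ξ ∘ₗ d) ^ i = shiftOp K ((i : K) * ξ) ∘ₗ d ^ i := by
  induction i with
  | zero =>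
    simp only [pow_zero, Nat.cast_zero, zero_mul]
    apply LinearMap.ext; intro f
    have : shiftOp K 0 f = f.comp (X + C 0) := rfl
    simp [this, Module.End.one_apply]
  | succ n ih =>
    rw [pow_succ, pow_succ, Module.End.mul_eq_comp, Module.End.mul_eq_comp, ih]
    calc (shiftOp K ((n:K) * ξ) ∘ₗ d ^ n) ∘ₗ (shiftOp K ξ ∘ₗ d)
        = shiftOp K ((n:K) * ξ) ∘ₗ ((d ^ n) ∘ₗ shiftOp K ξ) ∘ₗ d := by
          simp [LinearMap.comp_assoc]
      _ = (shiftOp K ((n:K) * ξ) ∘ₗ shiftOp K ξ) ∘ₗ (d ^ n) ∘ₗ d := by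
          rw [pow_comm_shift d hd]; simp [LinearMap.comp_assoc]
      _ = shiftOp K ((↑(n+1) : K) * ξ) ∘ₗ (d ^ n) ∘ₗ d := by
          rw [shiftOp_comp]; push_cast; ring_nf

theorem stmt10 {K : Type*} [Field K] [CharZero K] (d : Module.End K (Polynomial K))
    (hd : IsDeltaOperator d) (z : ℕ → K) (ξ : K) (t : ℕ → Polynomial K) :
    IsGoncarovBasis d (fun i => z i + (i : K) * ξ) t ↔
      IsGoncarovBasis (shiftOp K ξ ∘ₗ d) z t := by
  have key : ∀ i (f : Polynomial K), (((shiftOp K ξ ∘ₗ d) ^ i) f).eval (z i)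
      = ((d ^ i) f).eval (z i + (i : K) * ξ) := by
    intro i f
    rw [pow_shift d hd.1 ξ i, LinearMap.comp_apply, shiftOp_eval]
  constructor <;> intro h n <;> refine ⟨(h n).1, fun i => ?_⟩
  · rw [key]; exact (h n).2 i
  · rw [← key]; exact (h n).2 i
end

section
/- Expansion formula: if (t_n) is the generalized Gončarov basis for (𝔡, Z), then every f ∈ K[x] satisfies f(x) = Σ_{i=0}^{deg f} (ε_{z_i}(𝔡^i f) / i!) · t_i(x). In particular (t_n) is a basis of K[x]. -/
open Polynomial

theorem stmt12 {K : Type*} [Field K] [CharZero K] (d : Module.End K (Polynomial K))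
    (hd : IsDeltaOperator d) (z : ℕ → K) (t : ℕ → Polynomial K)
    (ht : IsGoncarovBasis d z t) :
    (∀ f : Polynomial K, f = ∑ i ∈ Finset.range (f.natDegree + 1),
        ((((d ^ i) f).eval (z i)) / (i.factorial : K)) • t i) ∧
    LinearIndependent K t ∧ Submodule.span K (Set.range t) = ⊤ := by
  have hdeg : ∀ n, (t n).natDegree = n := fun n => (ht n).1
  have heval : ∀ n i, ((d ^ i) (t n)).eval (z i) = if i = n then (n.factorial : K) else 0 :=
    fun n => (ht n).2
  have hne : ∀ n, t n ≠ 0 := by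
    intro n h
    have := heval n n
    simp [h] at this
    exact Nat.factorial_ne_zero n (by exact_mod_cast this.symm)
  have hlc : ∀ n, (t n).coeff n ≠ 0 := fun n h =>
    hne n (leadingCoeff_eq_zero.mp (by rw [leadingCoeff, hdeg]; exact h))
  -- Key evaluation lemma for finite sums
  have hsum : ∀ (s : Finset ℕ) (g : ℕ → K) (i : ℕ), i ∈ s →
      ((d ^ i) (∑ j ∈ s, g j • t j)).eval (z i) = g i * (i.factorial : K) := by
    intro s g i hi
    rw [map_sum]
    simp_rw [LinearMap.map_smul]
    rw [eval_finset_sum]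
    simp_rw [eval_smul, smul_eq_mul, heval]
    rw [Finset.sum_eq_single_of_mem i hi]
    · simp
    · intro j hj hji
      simp [Ne.symm hji]
  -- every polynomial of degree ≤ n is a combination of t 0, ..., t n
  have key : ∀ n (f : Polynomial K), f.natDegree ≤ n →
      ∃ g : ℕ → K, f = ∑ i ∈ Finset.range (n + 1), g i • t i := by
    intro n
    induction n with
    | zero =>
      intro f hf
      refine ⟨fun _ => f.coeff 0 / (t 0).coeff 0, ?_⟩
      have ht0 : t 0 = C ((t 0).coeff 0) := (eq_C_of_natDegree_le_zero (hdeg 0).le)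
      have hf0 : f = C (f.coeff 0) := eq_C_of_natDegree_le_zero hf
      rw [Finset.sum_range_one]
      nth_rewrite 2 [ht0]
      rw [smul_C, smul_eq_mul, div_mul_cancel₀ _ (hlc 0)]
      exact hf0
    | succ m ih =>
      intro f hf
      set c := f.coeff (m + 1) / (t (m + 1)).coeff (m + 1) with hc
      set p := f - c • t (m + 1) with hp
      have hpc : p.natDegree ≤ m := by
        rw [natDegree_le_iff_coeff_eq_zero]
        intro k hk
        rcases eq_or_lt_of_le (Nat.succ_le_of_lt hk) with h | h
        · rw [hp]
          simp only [coeff_sub, coeff_smul, smul_eq_mul]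
          rw [← h, hc, div_mul_cancel₀ _ (hlc (m + 1)), sub_self]
        · rw [hp]
          simp only [coeff_sub, coeff_smul, smul_eq_mul]
          rw [coeff_eq_zero_of_natDegree_lt (lt_of_le_of_lt hf h),
            coeff_eq_zero_of_natDegree_lt (by rw [hdeg]; exact h), mul_zero, sub_zero]
      obtain ⟨g, hg⟩ := ih p hpc
      refine ⟨fun i => if i = m + 1 then c else g i, ?_⟩
      show f = ∑ i ∈ Finset.range (m + 1 + 1), (if i = m + 1 then c else g i) • t i
      rw [Finset.sum_range_succ, if_pos rfl]
      have hss : ∑ i ∈ Finset.range (m + 1), (if i = m + 1 then c else g i) • t i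
          = ∑ i ∈ Finset.range (m + 1), g i • t i := by
        refine Finset.sum_congr rfl fun i hi => ?_
        have hi' := Finset.mem_range.mp hi
        rw [if_neg (by omega : i ≠ m + 1)]
      rw [hss, ← hg, hp]
      abel
  -- Expansion
  have hexp : ∀ f : Polynomial K, f = ∑ i ∈ Finset.range (f.natDegree + 1),
      ((((d ^ i) f).eval (z i)) / (i.factorial : K)) • t i := by
    intro f
    obtain ⟨g, hg⟩ := key f.natDegree f le_rfl
    have : ∀ i ∈ Finset.range (f.natDegree + 1),
        ((((d ^ i) f).eval (z i)) / (i.factorial : K)) • t i = g i • t i := by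
      intro i hi
      rw [hg, hsum _ _ _ hi, mul_div_cancel_right₀ _
        (by exact_mod_cast Nat.factorial_ne_zero i : (i.factorial : K) ≠ 0)]
    rw [Finset.sum_congr rfl this, ← hg]
  refine ⟨hexp, ?_, ?_⟩
  · rw [linearIndependent_iff']
    intro s g hgs i hi
    have := hsum s g i hi
    rw [hgs] at this
    simp only [map_zero, eval_zero] at this
    rcases mul_eq_zero.mp this.symm with h | h
    · exact h
    · exact absurd (by exact_mod_cast h) (Nat.factorial_ne_zero i)
  · rw [Submodule.eq_top_iff']
    intro f
    obtain ⟨g, hg⟩ := key f.natDegree f le_rfl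
    rw [hg]
    exact Submodule.sum_mem _ fun i _ =>
      Submodule.smul_mem _ _ (Submodule.subset_span ⟨i, rfl⟩)
end

section
/- Binomial expansion of generalized Gončarov polynomials: with (t_n^{(j)}) the generalized Gončarov basis for (𝔡, Z^{(j)}) and (p_n) the basic sequence of 𝔡, for all ξ ∈ K and n ∈ ℕ: t_n(x+ξ) = Σ_{i=0}^n C(n,i) t_{n−i}^{(i)}(ξ) p_i(x). In particular t_n(x) = Σ_{i=0}^n C(n,i) t_{n−i}^{(i)}(0) p_i(x). -/
open Polynomial

section Aux

variable {K : Type*} [Field K] [CharZero K]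

lemma aux_d_one (d : Module.End K (Polynomial K)) {c : K}
    (hsh : ∀ (a : K) (f : Polynomial K), d (f.comp (X + C a)) = (d f).comp (X + C a))
    (hdX : d X = C c) : d 1 = 0 := by
  have h := hsh 1 X
  rw [X_comp, hdX, C_comp, map_add, hdX] at h
  have h2 : C c + d (C 1) = C c + 0 := h.trans (add_zero (C c)).symm
  simpa [C_1] using add_left_cancel h2

lemma aux_binom (a : K) (m : ℕ) :
    (X + C a) ^ m = ∑ k ∈ Finset.range (m + 1),
      (a ^ (m - k) * (m.choose k : K)) • X ^ k := by
  rw [add_pow]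
  refine Finset.sum_congr rfl fun k _ => ?_
  rw [smul_eq_C_mul, C_mul, C_pow, ← C_eq_natCast]
  ring

lemma aux_key_identity (d : Module.End K (Polynomial K)) (a : K) (m : ℕ)
    (hsh : ∀ (a : K) (f : Polynomial K), d (f.comp (X + C a)) = (d f).comp (X + C a)) :
    (taylor a (d (X ^ m))) = ∑ k ∈ Finset.range (m + 1),
      (a ^ (m - k) * (m.choose k : K)) • d (X ^ k) := by
  rw [taylor_apply, ← hsh, X_pow_comp, aux_binom]
  rw [map_sum]
  exact Finset.sum_congr rfl fun k _ => by rw [map_smul]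

lemma aux_dXpow (d : Module.End K (Polynomial K)) {c : K}
    (hsh : ∀ (a : K) (f : Polynomial K), d (f.comp (X + C a)) = (d f).comp (X + C a))
    (hdX : d X = C c) :
    ∀ m : ℕ, 1 ≤ m → (∀ j, m ≤ j → (d (X ^ m)).coeff j = 0) ∧
      (d (X ^ m)).coeff (m - 1) = (m : K) * c := by
  have h1 : d 1 = 0 := aux_d_one d hsh hdX
  intro m
  induction m using Nat.strong_induction_on with
  | _ m IH =>
    match m with
    | 0 => omega
    | 1 =>
      intro _
      constructor
      · intro j hj
        rw [pow_one, hdX, coeff_C, if_neg (by omega : ¬ j = 0)]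
      · simp [pow_one, hdX]
    | (M + 2) =>
      intro _
      -- evaluate the taylor identity at coefficient M
      have hco : ∀ a : K, (hasseDeriv M (d (X ^ (M + 2)))).eval a
          = (d (X ^ (M + 2))).coeff M + a * (((M : K) + 2) * (((M : K) + 1) * c)) := by
        intro a
        have hh := congrArg (fun q => Polynomial.coeff q M) (aux_key_identity d a (M + 2) hsh)
        simp only [taylor_coeff] at hh
        rw [hh, finset_sum_coeff]
        rw [Finset.sum_range_succ, Finset.sum_range_succ]
        have hrest : ∑ k ∈ Finset.range (M + 1),
            ((a ^ (M + 2 - k) * ((M + 2).choose k : K)) • d (X ^ k)).coeff M = 0 := by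
          apply Finset.sum_eq_zero
          intro k hk
          rw [Finset.mem_range] at hk
          rw [coeff_smul]
          rcases Nat.eq_zero_or_pos k with hk0 | hk1
          · subst hk0; simp [h1]
          · have := (IH k (by omega) hk1).1 M (by omega)
            rw [this, smul_zero]
        rw [hrest, zero_add, coeff_smul, coeff_smul]
        have hM1 := (IH (M + 1) (by omega) (by omega)).2
        simp only [Nat.add_sub_cancel] at hM1
        rw [hM1]
        rw [(by omega : M + 2 - (M + 1) = 1), (by omega : M + 2 - (M + 2) = 0),
          Nat.choose_self, Nat.choose_succ_self_right]
        simp only [pow_zero, pow_one, Nat.cast_one, mul_one, one_smul, smul_eq_mul]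
        push_cast
        ring
      -- hence hasseDeriv M r is a specific linear polynomial
      have hpoly : hasseDeriv M (d (X ^ (M + 2)))
          = C ((d (X ^ (M + 2))).coeff M) + C (((M : K) + 2) * (((M : K) + 1) * c)) * X := by
        apply eq_of_sub_eq_zero
        apply Polynomial.zero_of_eval_zero
        intro x
        simp [hco x]
        ring
      constructor
      · intro j hj
        have hh := congrArg (fun q => Polynomial.coeff q (j - M)) hpoly
        simp only [hasseDeriv_coeff, coeff_add, coeff_C, coeff_C_mul, coeff_X] at hh
        rw [(by omega : j - M + M = j)] at hh
        rw [if_neg (by omega : ¬ j - M = 0), if_neg (by omega : ¬ (1 : ℕ) = j - M)] at hh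
        simp only [mul_zero, add_zero, zero_add] at hh
        have hchoose : ((j.choose M : K)) ≠ 0 :=
          Nat.cast_ne_zero.mpr (Nat.choose_pos (by omega)).ne'
        exact (mul_eq_zero.mp hh).resolve_left hchoose
      · have hh := congrArg (fun q => Polynomial.coeff q 1) hpoly
        simp only [hasseDeriv_coeff, coeff_add, coeff_C, coeff_C_mul, coeff_X] at hh
        norm_num at hh
        rw [Nat.add_comm 1 M, Nat.choose_succ_self_right] at hh
        have hM1ne : ((M + 1 : ℕ) : K) ≠ 0 := Nat.cast_ne_zero.mpr (by omega)
        have hh2 : ((M + 1 : ℕ) : K) * (d (X ^ (M + 2))).coeff (M + 1)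
            = ((M + 1 : ℕ) : K) * (((M + 2 : ℕ) : K) * c) := by
          rw [hh]; push_cast; ring
        have hfin := mul_left_cancel₀ hM1ne hh2
        rw [(by omega : M + 2 - 1 = M + 1), hfin]

end Aux

section Aux2

variable {K : Type*} [Field K] [CharZero K]
variable (d : Module.End K (Polynomial K)) {c : K}
variable (hsh : ∀ (a : K) (f : Polynomial K), d (f.comp (X + C a)) = (d f).comp (X + C a))
variable (hdX : d X = C c) (hc : c ≠ 0)

include hsh hdX

lemma aux_coeff_d_zero (f : Polynomial K) {n : ℕ} (hf : f.natDegree ≤ n) :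
    ∀ j, n ≤ j → (d f).coeff j = 0 := by
  intro j hj
  conv_lhs => rw [f.as_sum_range' (n + 1) (by omega)]
  rw [map_sum, finset_sum_coeff]
  apply Finset.sum_eq_zero
  intro k hk
  rw [Finset.mem_range] at hk
  rw [← C_mul_X_pow_eq_monomial, ← smul_eq_C_mul, map_smul, coeff_smul]
  rcases Nat.eq_zero_or_pos k with hk0 | hk1
  · subst hk0; simp [aux_d_one d hsh hdX]
  · rw [(aux_dXpow d hsh hdX k hk1).1 j (by omega), smul_zero]

lemma aux_coeff_d_top (f : Polynomial K) {N : ℕ} (hf : f.natDegree ≤ N + 1) :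
    (d f).coeff N = ((N + 1 : ℕ) : K) * c * f.coeff (N + 1) := by
  conv_lhs => rw [f.as_sum_range' (N + 2) (by omega)]
  rw [map_sum, finset_sum_coeff, Finset.sum_range_succ]
  have hrest : ∑ k ∈ Finset.range (N + 1), (d (monomial k (f.coeff k))).coeff N = 0 := by
    apply Finset.sum_eq_zero
    intro k hk
    rw [Finset.mem_range] at hk
    rw [← C_mul_X_pow_eq_monomial, ← smul_eq_C_mul, map_smul, coeff_smul]
    rcases Nat.eq_zero_or_pos k with hk0 | hk1
    · subst hk0; simp [aux_d_one d hsh hdX]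
    · rw [(aux_dXpow d hsh hdX k hk1).1 N (by omega), smul_zero]
  rw [hrest, zero_add, ← C_mul_X_pow_eq_monomial, ← smul_eq_C_mul, map_smul, coeff_smul]
  have := (aux_dXpow d hsh hdX (N + 1) (by omega)).2
  simp only [Nat.add_sub_cancel] at this
  rw [this, smul_eq_mul]
  ring

lemma aux_natDegree_d_le (f : Polynomial K) {n : ℕ} (hf : f.natDegree ≤ n + 1) :
    (d f).natDegree ≤ n := by
  rw [natDegree_le_iff_coeff_eq_zero]
  intro j hj
  exact aux_coeff_d_zero d hsh hdX f hf j (by omega)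

lemma aux_d_const (f : Polynomial K) (hf : f.natDegree = 0) : d f = 0 := by
  rw [Polynomial.eq_C_of_natDegree_le_zero (le_of_eq hf), ← mul_one (C (f.coeff 0)),
    ← smul_eq_C_mul, map_smul, aux_d_one d hsh hdX, smul_zero]

include hc in
lemma aux_d_exact (f : Polynomial K) {N : ℕ} (hf : f.natDegree = N + 1) :
    d f ≠ 0 ∧ (d f).natDegree = N := by
  have hf0 : f ≠ 0 := fun h => by simp [h] at hf
  have hlead : f.coeff (N + 1) ≠ 0 := by
    rw [← hf]; exact leadingCoeff_ne_zero.mpr hf0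
  have hcoe : (d f).coeff N ≠ 0 := by
    rw [aux_coeff_d_top d hsh hdX f (le_of_eq hf)]
    exact mul_ne_zero (mul_ne_zero (Nat.cast_ne_zero.mpr (by omega)) hc) hlead
  refine ⟨fun h => by simp [h] at hcoe, le_antisymm ?_ (le_natDegree_of_ne_zero hcoe)⟩
  exact aux_natDegree_d_le d hsh hdX f (le_of_eq hf)

end Aux2

section Aux3

variable {K : Type*} [Field K] [CharZero K]
variable (d : Module.End K (Polynomial K)) {c : K}
variable (hsh : ∀ (a : K) (f : Polynomial K), d (f.comp (X + C a)) = (d f).comp (X + C a))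
variable (hdX : d X = C c) (hc : c ≠ 0)

include hsh hdX

lemma aux_natDegree_dpow_le (k : ℕ) (f : Polynomial K) {n : ℕ} (hf : f.natDegree ≤ k + n) :
    ((d ^ k) f).natDegree ≤ n := by
  induction k generalizing f with
  | zero => simpa using hf
  | succ k IH =>
    rw [pow_succ, Module.End.mul_apply]
    exact IH (d f) (aux_natDegree_d_le d hsh hdX f (by omega))

include hc in
lemma aux_unique_zero :
    ∀ (n : ℕ) (w : ℕ → K) (g : Polynomial K), g.natDegree ≤ n →
      (∀ i, i ≤ n → ((d ^ i) g).eval (w i) = 0) → g = 0 := by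
  intro n
  induction n with
  | zero =>
    intro w g hg h0
    have := h0 0 le_rfl
    rw [pow_zero, Module.End.one_apply] at this
    rw [Polynomial.eq_C_of_natDegree_le_zero hg] at this ⊢
    rw [eval_C] at this
    rw [this, map_zero]
  | succ n IH =>
    intro w g hg h0
    have hdg : d g = 0 := by
      refine IH (fun i => w (i + 1)) (d g) (aux_natDegree_d_le d hsh hdX g hg) ?_
      intro i hi
      have := h0 (i + 1) (by omega)
      rwa [pow_succ, Module.End.mul_apply] at this
    have hg0 : g.natDegree = 0 := by
      by_contra h
      obtain ⟨N, hN⟩ : ∃ N, g.natDegree = N + 1 :=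
        ⟨g.natDegree - 1, by omega⟩
      exact (aux_d_exact d hsh hdX hc g hN).1 hdg
    have := h0 0 (by omega)
    rw [pow_zero, Module.End.one_apply] at this
    rw [Polynomial.eq_C_of_natDegree_le_zero (le_of_eq hg0)] at this ⊢
    rw [eval_C] at this
    rw [this, map_zero]

lemma aux_dpow_comp (k : ℕ) (a : K) (f : Polynomial K) :
    (d ^ k) (f.comp (X + C a)) = ((d ^ k) f).comp (X + C a) := by
  induction k with
  | zero => simp
  | succ k IH => rw [pow_succ', Module.End.mul_apply, IH, hsh, ← Module.End.mul_apply]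

end Aux3

section Aux4

variable {K : Type*} [Field K] [CharZero K]
variable (d : Module.End K (Polynomial K)) {c : K}
variable (hsh : ∀ (a : K) (f : Polynomial K), d (f.comp (X + C a)) = (d f).comp (X + C a))
variable (hdX : d X = C c) (hc : c ≠ 0)
variable (p : ℕ → Polynomial K) (hp0 : p 0 = 1)
variable (hpeval : ∀ n, 1 ≤ n → (p n).eval 0 = 0)
variable (hpd : ∀ n, 1 ≤ n → d (p n) = (n : K) • p (n - 1))

include hsh hdX hc hp0 hpd in
lemma aux_p_deg_s13 : ∀ i, p i ≠ 0 ∧ (p i).natDegree = i := by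
  intro i
  induction i with
  | zero => rw [hp0]; exact ⟨one_ne_zero, natDegree_one⟩
  | succ i IH =>
    have hdp : d (p (i + 1)) = ((i + 1 : ℕ) : K) • p i := by
      simpa using hpd (i + 1) (by omega)
    have hne : d (p (i + 1)) ≠ 0 := by
      rw [hdp]
      exact smul_ne_zero (Nat.cast_ne_zero.mpr (by omega)) IH.1
    have hp1ne : p (i + 1) ≠ 0 := fun h => hne (by rw [h, map_zero])
    have hpos : (p (i + 1)).natDegree ≠ 0 := fun h =>
      hne (aux_d_const d hsh hdX _ h)
    obtain ⟨N, hN⟩ : ∃ N, (p (i + 1)).natDegree = N + 1 :=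
      ⟨(p (i + 1)).natDegree - 1, by omega⟩
    have hdeg := (aux_d_exact d hsh hdX hc _ hN).2
    rw [hdp] at hdeg
    have hsm : (((i + 1 : ℕ) : K) • p i).natDegree = i := by
      rw [smul_eq_C_mul, natDegree_C_mul (Nat.cast_ne_zero.mpr (by omega)), IH.2]
    rw [hsm] at hdeg
    exact ⟨hp1ne, by omega⟩

include hp0 hpd in
lemma aux_dpow_p : ∀ k i, k ≤ i →
    (d ^ k) (p i) = ((i.descFactorial k : ℕ) : K) • p (i - k) := by
  intro k
  induction k with
  | zero => intro i _; simp
  | succ k IH =>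
    intro i hik
    rw [pow_succ', Module.End.mul_apply, IH i (by omega), map_smul,
      hpd (i - k) (by omega)]
    rw [smul_smul, Nat.descFactorial_succ, ← Nat.sub_sub]
    congr 1
    push_cast [Nat.cast_sub (by omega : k ≤ i)]
    ring

include hsh hdX hp0 hpd hpeval in
lemma aux_eval0_dpow_p : ∀ k i, ((d ^ k) (p i)).eval 0
    = if k = i then ((i.factorial : ℕ) : K) else 0 := by
  intro k i
  rcases le_or_gt k i with hki | hik
  · rw [aux_dpow_p d p hp0 hpd k i hki, eval_smul, smul_eq_mul]
    rcases eq_or_lt_of_le hki with heq | hlt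
    · subst heq
      rw [if_pos rfl, Nat.sub_self, hp0, eval_one, mul_one, Nat.descFactorial_self]
    · rw [if_neg (by omega), hpeval (i - k) (by omega), mul_zero]
  · rw [if_neg (by omega)]
    obtain ⟨j, hj⟩ : ∃ j, k = i + 1 + j := ⟨k - (i + 1), by omega⟩
    subst hj
    rw [(by omega : i + 1 + j = j + (i + 1)), pow_add, Module.End.mul_apply,
      pow_succ', Module.End.mul_apply, aux_dpow_p d p hp0 hpd i i le_rfl,
      Nat.sub_self, hp0, map_smul, aux_d_one d hsh hdX, smul_zero, map_zero, eval_zero]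

end Aux4

section Aux5

variable {K : Type*} [Field K] [CharZero K]
variable (d : Module.End K (Polynomial K)) {c : K}
variable (hsh : ∀ (a : K) (f : Polynomial K), d (f.comp (X + C a)) = (d f).comp (X + C a))
variable (hdX : d X = C c) (hc : c ≠ 0)
variable (z : ℕ → K) (T : ℕ → ℕ → Polynomial K)
variable (hT : ∀ j, IsGoncarovBasis d (fun i => z (i + j)) (T j))

lemma aux_descFact_mul {n k : ℕ} (hk : k ≤ n) :
    n.descFactorial k * (n - k).factorial = n.factorial := by
  rw [Nat.descFactorial_eq_factorial_mul_choose,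
    ← Nat.choose_mul_factorial_mul_factorial hk]
  ring

include hsh hdX hc hT in
lemma aux_key : ∀ n k, k ≤ n →
    (d ^ k) (T 0 n) = ((n.descFactorial k : ℕ) : K) • T k (n - k) := by
  intro n k hk
  rw [← sub_eq_zero]
  apply aux_unique_zero d hsh hdX hc (n - k) (fun i => z (i + k))
  · refine le_trans (natDegree_sub_le _ _) (max_le ?_ ?_)
    · exact aux_natDegree_dpow_le d hsh hdX k _ (by rw [(hT 0 n).1]; omega)
    · exact natDegree_smul_le _ _ |>.trans (le_of_eq (hT k (n - k)).1)
  · intro i hi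
    rw [map_sub, map_smul, eval_sub, eval_smul, ← Module.End.mul_apply, ← pow_add]
    have h1 : ((d ^ (i + k)) (T 0 n)).eval (z (i + k))
        = if i + k = n then ((n.factorial : ℕ) : K) else 0 := by
      simpa using (hT 0 n).2 (i + k)
    have h2 : ((d ^ i) (T k (n - k))).eval (z (i + k))
        = if i = n - k then (((n - k).factorial : ℕ) : K) else 0 :=
      (hT k (n - k)).2 i
    rw [h1, h2]
    rcases eq_or_ne i (n - k) with heq | hne
    · rw [if_pos heq, if_pos (by omega)]
      subst heq
      rw [smul_eq_mul, ← Nat.cast_mul, aux_descFact_mul hk, sub_self]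
    · rw [if_neg hne, if_neg (by omega), smul_zero, sub_zero]

end Aux5

theorem stmt13 {K : Type*} [Field K] [CharZero K] (d : Module.End K (Polynomial K))
    (hd : IsDeltaOperator d) (z : ℕ → K) (p : ℕ → Polynomial K)
    (hp : IsBasicSequence d p) (T : ℕ → ℕ → Polynomial K)
    (hT : ∀ j, IsGoncarovBasis d (fun i => z (i + j)) (T j)) :
    (∀ (ξ : K) (n : ℕ), (T 0 n).comp (X + C ξ) =
        ∑ i ∈ Finset.range (n + 1),
          (n.choose i : K) • ((T i (n - i)).eval ξ) • p i) ∧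
    (∀ n : ℕ, T 0 n =
        ∑ i ∈ Finset.range (n + 1),
          (n.choose i : K) • ((T i (n - i)).eval 0) • p i) := by
  obtain ⟨hshift, c, hc, hdX⟩ := hd
  obtain ⟨hp0, hpeval, hpd⟩ := hp
  have hsh : ∀ (a : K) (f : Polynomial K),
      d (f.comp (X + C a)) = (d f).comp (X + C a) := by
    intro a f
    simpa [shiftOp, comp, aeval_def, algebraMap_eq] using LinearMap.congr_fun (hshift a) f
  have main : ∀ (ξ : K) (n : ℕ), (T 0 n).comp (X + C ξ) =
      ∑ i ∈ Finset.range (n + 1),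
        (n.choose i : K) • ((T i (n - i)).eval ξ) • p i := by
    intro ξ n
    rw [← sub_eq_zero]
    apply aux_unique_zero d hsh hdX hc n (fun _ => 0)
    · refine le_trans (natDegree_sub_le _ _) (max_le ?_ ?_)
      · refine le_trans (natDegree_comp_le) ?_
        rw [(hT 0 n).1, natDegree_X_add_C, mul_one]
      · apply Polynomial.natDegree_sum_le_of_forall_le
        intro i hi
        rw [Finset.mem_range] at hi
        refine le_trans (natDegree_smul_le _ _) (le_trans (natDegree_smul_le _ _) ?_)
        rw [(aux_p_deg_s13 d hsh hdX hc p hp0 hpd i).2]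
        omega
    · intro i hi
      rw [map_sub, eval_sub, aux_dpow_comp d hsh hdX i ξ (T 0 n), eval_comp]
      simp only [eval_add, eval_X, eval_C, zero_add]
      rw [aux_key d hsh hdX hc z T hT n i hi, eval_smul, smul_eq_mul]
      rw [map_sum, eval_finset_sum]
      simp only [map_smul]
      have hsum : ∀ j ∈ Finset.range (n + 1),
          (((n.choose j : K) • ((T j (n - j)).eval ξ) • (d ^ i) (p j)).eval 0)
          = if j = i then (n.choose i : K) * ((T i (n - i)).eval ξ)
              * ((i.factorial : ℕ) : K) else 0 := by
        intro j hj
        rw [eval_smul, eval_smul, aux_eval0_dpow_p d hsh hdX p hp0 hpeval hpd i j]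
        rcases eq_or_ne j i with heq | hne
        · subst heq
          rw [if_pos rfl, if_pos rfl, smul_eq_mul, smul_eq_mul]
          ring
        · rw [if_neg (fun h => hne h.symm), if_neg hne, smul_zero, smul_zero]
      have : ∀ j ∈ Finset.range (n + 1),
          (((n.choose j : K) • ((T j (n - j)).eval ξ) • (d ^ i) (p j)).eval 0)
          = ((fun j => if j = i then (n.choose i : K) * ((T i (n - i)).eval ξ)
              * ((i.factorial : ℕ) : K) else 0) j) := hsum
      rw [Finset.sum_congr rfl this, Finset.sum_ite_eq' (Finset.range (n + 1)) i]
      rw [if_pos (Finset.mem_range.mpr (by omega))]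
      rw [Nat.descFactorial_eq_factorial_mul_choose]
      push_cast
      ring
  refine ⟨main, fun n => ?_⟩
  have := main 0 n
  rw [map_zero, add_zero, comp_X] at this
  exact this
end

section
/- Combinatorial formula for the constant term: if (t_n) is the generalized Gončarov basis for (𝔡, Z) and (p_n) the basic sequence of 𝔡, then for n ≥ 1, t_n(0) = Σ_{ρ} (−1)^{|ρ|} p_{b_1}(z_0) p_{b_2}(z_{s_1}) ⋯ p_{b_k}(z_{s_{k−1}}), where the sum is over all ordered partitions ρ = (B_1, …, B_k) of {1,…,n}, b_i = |B_i|, and s_i = b_1 + ⋯ + b_i. -/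
open Polynomial Finset Function

section Comb
variable {K : Type*} [Field K] (p : ℕ → Polynomial K) (z : ℕ → K)

noncomputable def wg {n k : ℕ} (g : Fin n → Fin k) : K :=
  (-1 : K) ^ k *
    ∏ i : Fin k,
      (p ((Finset.univ.filter (fun m => g m = i)).card)).eval
        (z ((Finset.univ.filter (fun m => g m < i)).card))

noncomputable def SS (n k : ℕ) : K :=
  ∑ g ∈ Finset.univ.filter (fun g : Fin n → Fin k => Function.Surjective g), wg p z g

noncomputable def AA (n : ℕ) : K := ∑ k ∈ Finset.range (n + 1), SS p z n k

lemma SS_eq_zero {n k : ℕ} (h : n < k) : SS p z n k = 0 := by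
  rw [SS, Finset.sum_eq_zero]
  intro g hg
  simp only [Finset.mem_filter] at hg
  have := Fintype.card_le_of_surjective g hg.2
  simp at this; omega

lemma AA_zero : AA p z 0 = 1 := by
  rw [AA, Finset.sum_range_one, SS]
  have h1 : (Finset.univ.filter (fun g : Fin 0 → Fin 0 => Function.Surjective g))
      = Finset.univ := by
    apply Finset.filter_true_of_mem; intro g _ b; exact b.elim0
  rw [h1, Finset.univ_unique, Finset.sum_singleton, wg]
  simp


lemma wg_decomp {n k' : ℕ} (T : Finset (Fin n)) (e' : Fin T.card ≃ {x // x ∈ T})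
    (g : Fin n → Fin (k' + 1))
    (hτ : Finset.univ.filter (fun m => g m ≠ Fin.last k') = T)
    (hne : ∀ j, g (e' j) ≠ Fin.last k') :
    wg p z g = -((p (n - T.card)).eval (z T.card)) *
      wg p z (fun j => (g (e' j)).castPred (hne j)) := by
  classical
  have hmemT : ∀ m : Fin n, m ∈ T ↔ g m ≠ Fin.last k' := by
    intro m
    rw [← hτ]; simp
  have h_last_fib : (Finset.univ.filter (fun m => g m = Fin.last k')).card = n - T.card := by
    have : Finset.univ.filter (fun m => g m = Fin.last k') = Tᶜ := by
      ext m; simp [hmemT m]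
    rw [this, Finset.card_compl]; simp
  have h_last_blw : (Finset.univ.filter (fun m => g m < Fin.last k')).card = T.card := by
    congr 1
    ext m; simp [hmemT m, Fin.lt_last_iff_ne_last]
  have hfib : ∀ r : Fin k',
      (Finset.univ.filter (fun j : Fin T.card => (g (e' j)).castPred (hne j) = r)).card
        = (Finset.univ.filter (fun m : Fin n => g m = r.castSucc)).card := by
    intro r
    have hmemfib : ∀ m : Fin n, g m = r.castSucc → m ∈ T := by
      intro m hm
      rw [hmemT, hm]
      exact (Fin.castSucc_lt_last r).ne
    refine Finset.card_bij' (fun j _ => (e' j : Fin n))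
      (fun m hm => e'.symm ⟨m, hmemfib m (by simpa using hm)⟩) ?_ ?_ ?_ ?_
    · intro j hj
      simp only [Finset.mem_filter, Finset.mem_univ, true_and] at hj ⊢
      rw [← hj, Fin.castSucc_castPred]
    · intro m hm
      simp only [Finset.mem_filter, Finset.mem_univ, true_and] at hm ⊢
      have h2 : (e' (e'.symm ⟨m, hmemfib m hm⟩) : Fin n) = m := by
        rw [Equiv.apply_symm_apply]
      apply Fin.castSucc_injective
      rw [Fin.castSucc_castPred, h2, hm]
    · intro j _
      rw [Subtype.coe_eta, Equiv.symm_apply_apply]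
    · intro m _
      rw [Equiv.apply_symm_apply]
  have hblw : ∀ r : Fin k',
      (Finset.univ.filter (fun j : Fin T.card => (g (e' j)).castPred (hne j) < r)).card
        = (Finset.univ.filter (fun m : Fin n => g m < r.castSucc)).card := by
    intro r
    have hmemblw : ∀ m : Fin n, g m < r.castSucc → m ∈ T := by
      intro m hm
      rw [hmemT]
      intro hlast
      rw [hlast] at hm
      have h4 := not_lt.mpr (Fin.castSucc_lt_last r).le
      exact h4 (lt_of_le_of_lt (le_refl _) hm)
    refine Finset.card_bij' (fun j _ => (e' j : Fin n))
      (fun m hm => e'.symm ⟨m, hmemblw m (by simpa using hm)⟩) ?_ ?_ ?_ ?_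
    · intro j hj
      simp only [Finset.mem_filter, Finset.mem_univ, true_and] at hj ⊢
      rw [Fin.lt_def] at hj ⊢
      simpa using hj
    · intro m hm
      simp only [Finset.mem_filter, Finset.mem_univ, true_and] at hm ⊢
      have h2 : (e' (e'.symm ⟨m, hmemblw m hm⟩) : Fin n) = m := by
        rw [Equiv.apply_symm_apply]
      rw [Fin.lt_def] at hm ⊢
      simp only [Fin.coe_castPred, h2]
      simpa using hm
    · intro j _
      rw [Subtype.coe_eta, Equiv.symm_apply_apply]
    · intro m _
      rw [Equiv.apply_symm_apply]
  rw [wg, wg, Fin.prod_univ_castSucc, h_last_fib, h_last_blw]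
  have hprod : ∀ r : Fin k',
      (p ((Finset.univ.filter (fun m : Fin n => g m = r.castSucc)).card)).eval
        (z ((Finset.univ.filter (fun m : Fin n => g m < r.castSucc)).card))
      = (p ((Finset.univ.filter
            (fun j : Fin T.card => (g (e' j)).castPred (hne j) = r)).card)).eval
        (z ((Finset.univ.filter
            (fun j : Fin T.card => (g (e' j)).castPred (hne j) < r)).card)) := by
    intro r
    rw [hfib r, hblw r]
  rw [Finset.prod_congr rfl (fun r _ => hprod r)]
  ring

lemma goncarov_inner_sum {n k' : ℕ} (T : Finset (Fin n)) (hT : T.card < n) :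
    ∑ g ∈ (Finset.univ.filter (fun g : Fin n → Fin (k' + 1) => Function.Surjective g)).filter
        (fun g => Finset.univ.filter (fun m => g m ≠ Fin.last k') = T),
      wg p z g
    = -((p (n - T.card)).eval (z T.card)) * SS p z T.card k' := by
  classical
  rw [SS, Finset.mul_sum]
  set e : Fin T.card ≃ {x // x ∈ T} := T.equivFin.symm with he
  refine Finset.sum_bij' (i := fun g hg => ?_) (j := fun g'' hg'' => ?_) ?_ ?_ ?_ ?_ ?_
  · -- forward map Φ
    intro j
    exact (g (e j)).castPred (by
      have hmem : (e j : Fin n) ∈ T := (e j).2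
      simp only [Finset.mem_filter] at hg
      have h2 := (Finset.ext_iff.mp hg.2 (e j : Fin n)).mpr hmem
      simpa using (Finset.mem_filter.mp h2).2)
  · -- backward map Ψ
    exact fun m => if h : m ∈ T then (g'' (e.symm ⟨m, h⟩)).castSucc else Fin.last k'
  · -- Φ lands in target
    intro g hg
    simp only [Finset.mem_filter] at hg ⊢
    obtain ⟨⟨-, hsurj⟩, hτ⟩ := hg
    refine ⟨Finset.mem_univ _, ?_⟩
    intro b
    obtain ⟨m, hm⟩ := hsurj b.castSucc
    have hmT : m ∈ T := by
      rw [← hτ]; simp [hm, (Fin.castSucc_lt_last b).ne]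
    refine ⟨e.symm ⟨m, hmT⟩, ?_⟩
    have : (e (e.symm ⟨m, hmT⟩) : Fin n) = m := by rw [Equiv.apply_symm_apply]
    simp only [this, hm, Fin.castPred_castSucc]
  · -- Ψ lands in source
    intro g'' hg''
    simp only [Finset.mem_filter] at hg'' ⊢
    refine ⟨⟨Finset.mem_univ _, ?_⟩, ?_⟩
    · intro b
      rcases eq_or_ne b (Fin.last k') with rfl | hb
      · have : (Tᶜ).Nonempty := by
          rw [← Finset.card_pos, Finset.card_compl]
          simpa using Nat.sub_pos_of_lt (by simpa using hT)
        obtain ⟨m, hm⟩ := this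
        rw [Finset.mem_compl] at hm
        exact ⟨m, by simp [hm]⟩
      · obtain ⟨b', rfl⟩ := Fin.exists_castSucc_eq.mpr hb
        obtain ⟨j, hj⟩ := hg''.2 b'
        refine ⟨(e j : Fin n), ?_⟩
        have h1 : (e j : Fin n) ∈ T := (e j).2
        simp only [h1, dif_pos]
        have h3 : e.symm ⟨(e j : Fin n), h1⟩ = j := by
          rw [Subtype.coe_eta, Equiv.symm_apply_apply]
        rw [h3, hj]
    · ext m
      by_cases hm : m ∈ T <;>
        simp [hm, (Fin.castSucc_lt_last _).ne]
  · -- left inverse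
    intro g hg
    simp only [Finset.mem_filter] at hg
    funext m
    by_cases hm : m ∈ T
    · simp only [hm, dif_pos]
      have h2 : (e (e.symm ⟨m, hm⟩) : Fin n) = m := by rw [Equiv.apply_symm_apply]
      simp_rw [h2]
      exact Fin.castSucc_castPred _ _
    · simp only [hm, dif_neg, not_false_iff]
      have := hg.2
      have hm' : m ∉ Finset.univ.filter (fun m => g m ≠ Fin.last k') := by rw [this]; exact hm
      simp only [Finset.mem_filter, Finset.mem_univ, true_and, not_not] at hm'
      exact hm'.symm
  · -- right inverse
    intro g'' hg''
    funext j
    have h1 : (e j : Fin n) ∈ T := (e j).2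
    have h3 : e.symm ⟨(e j : Fin n), h1⟩ = j := by
      rw [Subtype.coe_eta, Equiv.symm_apply_apply]
    simp only [h1, dif_pos, h3, Fin.castPred_castSucc]
  · -- weights
    intro g hg
    simp only [Finset.mem_filter] at hg
    exact wg_decomp p z T e g hg.2 _


lemma AA_rec {n : ℕ} (hn : 1 ≤ n) :
    AA p z n = ∑ i ∈ Finset.range n,
      (n.choose i : K) * (-((p (n - i)).eval (z i)) * AA p z i) := by
  classical
  have h0 : SS p z n 0 = 0 := by
    rw [SS]
    have : (Finset.univ.filter (fun g : Fin n → Fin 0 => Function.Surjective g)) = ∅ :=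
      Finset.eq_empty_of_forall_notMem (fun g _ => (g ⟨0, hn⟩).elim0)
    rw [this, Finset.sum_empty]
  have step1 : AA p z n = ∑ k' ∈ Finset.range n, SS p z n (k' + 1) := by
    rw [AA, Finset.sum_range_succ', h0, add_zero]
  have step2 : ∀ k' : ℕ, SS p z n (k' + 1) =
      ∑ T ∈ Finset.univ.filter (fun T : Finset (Fin n) => T.card < n),
        (-((p (n - T.card)).eval (z T.card)) * SS p z T.card k') := by
    intro k'
    rw [SS]
    rw [← Finset.sum_fiberwise_of_maps_to
      (g := fun g : Fin n → Fin (k' + 1) => Finset.univ.filter (fun m => g m ≠ Fin.last k'))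
      (t := Finset.univ.filter (fun T : Finset (Fin n) => T.card < n)) ?_]
    · refine Finset.sum_congr rfl (fun T hT => ?_)
      simp only [Finset.mem_filter, Finset.mem_univ, true_and] at hT
      exact goncarov_inner_sum p z T hT
    · intro g hg
      simp only [Finset.mem_filter, Finset.mem_univ, true_and] at hg ⊢
      by_contra h
      push_neg at h
      have hcard : (Finset.univ.filter (fun m => g m ≠ Fin.last k')).card = n := by
        have hle := Finset.card_filter_le (Finset.univ : Finset (Fin n))
          (fun m => g m ≠ Fin.last k')
        simp only [Finset.card_univ, Fintype.card_fin] at hle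
        omega
      have huniv : (Finset.univ.filter (fun m => g m ≠ Fin.last k')) = Finset.univ := by
        apply Finset.eq_univ_of_card
        simpa using hcard
      obtain ⟨m, hm⟩ := hg (Fin.last k')
      have : m ∈ Finset.univ.filter (fun m => g m ≠ Fin.last k') := by
        rw [huniv]; exact Finset.mem_univ m
      simp only [Finset.mem_filter] at this
      exact this.2 hm
  have step3 : ∀ k' : ℕ,
      (∑ T ∈ Finset.univ.filter (fun T : Finset (Fin n) => T.card < n),
        (-((p (n - T.card)).eval (z T.card)) * SS p z T.card k'))
      = ∑ i ∈ Finset.range n, (n.choose i : K) *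
          (-((p (n - i)).eval (z i)) * SS p z i k') := by
    intro k'
    rw [← Finset.sum_fiberwise_of_maps_to (g := fun T : Finset (Fin n) => T.card)
      (t := Finset.range n) ?_]
    · refine Finset.sum_congr rfl (fun i hi => ?_)
      simp only [Finset.mem_range] at hi
      have hfil : (Finset.univ.filter (fun T : Finset (Fin n) => T.card < n)).filter
          (fun T => T.card = i) = Finset.univ.filter (fun T : Finset (Fin n) => T.card = i) := by
        ext T
        simp only [Finset.mem_filter, Finset.mem_univ, true_and]
        constructor
        · rintro ⟨-, h⟩; exact h
        · intro h; exact ⟨by omega, h⟩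
      rw [hfil]
      rw [Finset.sum_congr rfl (fun T hT => by
        simp only [Finset.mem_filter, Finset.mem_univ, true_and] at hT
        rw [hT])]
      rw [Finset.sum_const]
      have hcard : (Finset.univ.filter (fun T : Finset (Fin n) => T.card = i)).card
          = n.choose i := by
        rw [← Finset.powerset_univ, ← Finset.powersetCard_eq_filter,
          Finset.card_powersetCard, Finset.card_univ, Fintype.card_fin]
      rw [hcard, nsmul_eq_mul]
    · intro T hT
      simp only [Finset.mem_filter, Finset.mem_univ, true_and] at hT
      simpa using hT
  have step4 : ∀ i, i < n → (∑ k' ∈ Finset.range n, SS p z i k') = AA p z i := by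
    intro i hi
    rw [AA]
    symm
    apply Finset.sum_subset
    · exact Finset.range_subset_range.mpr (by omega)
    · intro k hk hk'
      simp only [Finset.mem_range] at hk hk'
      exact SS_eq_zero p z (by omega)
  calc AA p z n = ∑ k' ∈ Finset.range n, SS p z n (k' + 1) := step1
    _ = ∑ k' ∈ Finset.range n, ∑ i ∈ Finset.range n, (n.choose i : K) *
          (-((p (n - i)).eval (z i)) * SS p z i k') := by
        refine Finset.sum_congr rfl (fun k' _ => ?_)
        rw [step2 k', step3 k']
    _ = ∑ i ∈ Finset.range n, ∑ k' ∈ Finset.range n, (n.choose i : K) *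
          (-((p (n - i)).eval (z i)) * SS p z i k') := Finset.sum_comm
    _ = ∑ i ∈ Finset.range n, (n.choose i : K) *
          (-((p (n - i)).eval (z i)) * AA p z i) := by
        refine Finset.sum_congr rfl (fun i hi => ?_)
        simp only [Finset.mem_range] at hi
        rw [← step4 i hi, Finset.mul_sum, Finset.mul_sum]

lemma SS_nil {n : ℕ} (hn : 1 ≤ n) : SS p z n 0 = 0 := by
  rw [SS]
  have : (Finset.univ.filter (fun g : Fin n → Fin 0 => Function.Surjective g)) = ∅ :=
    Finset.eq_empty_of_forall_notMem (fun g _ => (g ⟨0, hn⟩).elim0)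
  rw [this, Finset.sum_empty]

end Comb


section Analytic
variable {K : Type*} [Field K] [CharZero K] {d : Module.End K (Polynomial K)}

lemma delta_one_eq_zero (hd : IsDeltaOperator d) : d 1 = 0 := by
  obtain ⟨hsi, c, hc, hX⟩ := hd
  have h := congrArg (fun f : Module.End K (Polynomial K) => f X) (hsi 1)
  simp only [LinearMap.comp_apply] at h
  have hshiftX : shiftOp K 1 X = X + C 1 := by
    simp [shiftOp]
  have hshiftC : shiftOp K 1 (C c) = C c := by
    simp [shiftOp]
  rw [hshiftX, hX, hshiftC] at h
  have hC1 : (C 1 : Polynomial K) = (1 : K) • (1 : Polynomial K) := by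
    simp
  rw [map_add, hX, hC1, map_smul, one_smul] at h
  exact add_left_cancel (show C c + d 1 = C c + 0 by rw [add_zero]; exact h)

lemma pow_apply_basic (hd : IsDeltaOperator d) {p : ℕ → Polynomial K}
    (hp : IsBasicSequence d p) :
    ∀ i n : ℕ, i ≤ n → (d ^ i) (p n) = (n.descFactorial i : K) • p (n - i) := by
  intro i
  induction i with
  | zero => intro n _; simp
  | succ i ih =>
    intro n hin
    have hi : i ≤ n := by omega
    rw [pow_succ', Module.End.mul_apply, ih n hi, map_smul]
    have h1 : 1 ≤ n - i := by omega
    rw [hp.2.2 (n - i) h1]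
    rw [smul_smul]
    have : n - i - 1 = n - (i + 1) := by omega
    rw [this, Nat.descFactorial_succ]
    push_cast
    ring_nf

lemma pow_apply_basic_zero (hd : IsDeltaOperator d) {p : ℕ → Polynomial K}
    (hp : IsBasicSequence d p) :
    ∀ i n : ℕ, n < i → (d ^ i) (p n) = 0 := by
  have key : ∀ n, (d ^ (n + 1)) (p n) = 0 := by
    intro n
    rw [pow_succ', Module.End.mul_apply,
      pow_apply_basic hd hp n n le_rfl, Nat.sub_self, hp.1, map_smul,
      delta_one_eq_zero hd, smul_zero]
  intro i n hni
  obtain ⟨j, rfl⟩ : ∃ j, i = (n + 1) + j := ⟨i - (n + 1), by omega⟩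
  rw [add_comm, pow_add, Module.End.mul_apply, key, map_zero]

lemma span_aux {t : ℕ → Polynomial K} (ht0 : t 0 = 1)
    (hdeg : ∀ n, (t n).natDegree = n) :
    ∀ N : ℕ, ∀ q : Polynomial K, q.natDegree ≤ N →
      q ∈ Submodule.span K (Set.range (fun i : Fin (N + 1) => t i)) := by
  intro N
  induction N with
  | zero =>
    intro q hq
    obtain ⟨a, ha⟩ := Polynomial.natDegree_eq_zero.mp (Nat.le_zero.mp hq)
    have : q = a • t 0 := by rw [ht0, ← ha]; simp [Polynomial.smul_eq_C_mul]
    rw [this]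
    exact Submodule.smul_mem _ _ (Submodule.subset_span ⟨0, rfl⟩)
  | succ N ihN =>
    intro q hq
    have htne : t (N + 1) ≠ 0 := by
      intro h
      have := hdeg (N + 1)
      rw [h, Polynomial.natDegree_zero] at this
      omega
    set c := (t (N + 1)).leadingCoeff with hc
    have hcne : c ≠ 0 := Polynomial.leadingCoeff_ne_zero.mpr htne
    set r := q - (q.coeff (N + 1) / c) • t (N + 1) with hr
    have hrc : r.coeff (N + 1) = 0 := by
      rw [hr, Polynomial.coeff_sub, Polynomial.coeff_smul]
      have : (t (N + 1)).coeff (N + 1) = c := by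
        rw [hc, Polynomial.leadingCoeff, hdeg]
      rw [this, smul_eq_mul, div_mul_cancel₀ _ hcne, sub_self]
    have hrdeg : r.natDegree ≤ N := by
      rw [Polynomial.natDegree_le_iff_coeff_eq_zero]
      intro M hM
      rcases Nat.lt_or_ge (N + 1) M with h | h
      · have e1 : q.coeff M = 0 :=
          Polynomial.coeff_eq_zero_of_natDegree_lt (by omega)
        have e2 : (t (N + 1)).coeff M = 0 :=
          Polynomial.coeff_eq_zero_of_natDegree_lt (by rw [hdeg]; omega)
        rw [hr, Polynomial.coeff_sub, Polynomial.coeff_smul, e1, e2]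
        simp
      · have : M = N + 1 := by omega
        rw [this]; exact hrc
    have hrmem := ihN r hrdeg
    have hsub : Set.range (fun i : Fin (N + 1) => t i) ⊆
        Set.range (fun i : Fin (N + 2) => t i) := by
      rintro x ⟨i, rfl⟩
      exact ⟨i.castSucc, rfl⟩
    have hrmem2 : r ∈ Submodule.span K (Set.range (fun i : Fin (N + 2) => t i)) :=
      Submodule.span_mono hsub hrmem
    have hlast : t (N + 1) ∈ Submodule.span K (Set.range (fun i : Fin (N + 2) => t i)) :=
      Submodule.subset_span ⟨Fin.last (N + 1), rfl⟩
    have : q = r + (q.coeff (N + 1) / c) • t (N + 1) := by rw [hr]; ring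
    rw [this]
    exact Submodule.add_mem _ hrmem2 (Submodule.smul_mem _ _ hlast)

lemma t_zero_eq_one {z : ℕ → K} {t : ℕ → Polynomial K} (ht : IsGoncarovBasis d z t) :
    t 0 = 1 := by
  obtain ⟨a, ha⟩ := Polynomial.natDegree_eq_zero.mp (ht 0).1
  have h := (ht 0).2 0
  simp only [pow_zero, Module.End.one_apply, if_pos rfl, Nat.factorial_zero] at h
  rw [← ha] at h ⊢
  simp at h
  rw [h]
  simp

lemma t_eval_rec (hd : IsDeltaOperator d) {z : ℕ → K} {t p : ℕ → Polynomial K}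
    (ht : IsGoncarovBasis d z t) (hp : IsBasicSequence d p) {n : ℕ} (hn : 1 ≤ n) :
    (t n).eval 0 = -∑ i ∈ Finset.range n,
      (n.choose i : K) * ((p (n - i)).eval (z i) * (t i).eval 0) := by
  classical
  set N := max n (p n).natDegree with hN
  have hmem : p n ∈ Submodule.span K (Set.range (fun i : Fin (N + 1) => t i)) :=
    span_aux (t_zero_eq_one ht) (fun m => (ht m).1) N (p n) (le_max_right _ _)
  obtain ⟨a, ha⟩ := (Submodule.mem_span_range_iff_exists_fun K).mp hmem
  -- compute the coefficients via the functionals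
  have hval : ∀ j : Fin (N + 1),
      ((d ^ (j : ℕ)) (p n)).eval (z j) = a j * ((j : ℕ).factorial : K) := by
    intro j
    rw [← ha, map_sum]
    rw [Polynomial.eval_finset_sum]
    have : ∀ i : Fin (N + 1),
        (((d ^ (j : ℕ)) (a i • t i)).eval (z j)) =
          a i * (if (j : ℕ) = (i : ℕ) then (((i : ℕ)).factorial : K) else 0) := by
      intro i
      rw [map_smul]
      rw [Polynomial.eval_smul, smul_eq_mul]
      congr 1
      exact (ht i).2 j
    rw [Finset.sum_congr rfl (fun i _ => this i)]
    rw [Finset.sum_eq_single j]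
    · rw [if_pos rfl]
    · intro b _ hb
      have : (j : ℕ) ≠ (b : ℕ) := fun h => hb (Fin.ext h.symm)
      simp [this]
    · intro h; exact absurd (Finset.mem_univ j) h
  have hfact_ne : ∀ m : ℕ, ((m.factorial : K)) ≠ 0 := fun m =>
    Nat.cast_ne_zero.mpr (Nat.factorial_ne_zero m)
  have ha_le : ∀ j : Fin (N + 1), (j : ℕ) ≤ n →
      a j = ((n.choose (j : ℕ)) : K) * (p (n - (j : ℕ))).eval (z (j : ℕ)) := by
    intro j hj
    have h1 := hval j
    rw [pow_apply_basic hd hp _ _ hj, Polynomial.eval_smul, smul_eq_mul] at h1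
    have h2 : (n.descFactorial (j : ℕ) : K)
        = ((j : ℕ).factorial : K) * (n.choose (j : ℕ) : K) := by
      rw [← Nat.cast_mul, ← Nat.descFactorial_eq_factorial_mul_choose]
    have h3 : ((j : ℕ).factorial : K) * ((n.choose (j : ℕ) : K) *
        (p (n - (j : ℕ))).eval (z (j : ℕ))) = ((j : ℕ).factorial : K) * a j := by
      rw [← mul_assoc, ← h2]
      linear_combination h1
    exact (mul_left_cancel₀ (hfact_ne _) h3).symm
  have ha_gt : ∀ j : Fin (N + 1), n < (j : ℕ) → a j = 0 := by
    intro j hj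
    have h1 := hval j
    rw [pow_apply_basic_zero hd hp _ _ hj] at h1
    simp only [Polynomial.eval_zero] at h1
    have := h1.symm
    rcases mul_eq_zero.mp this with h | h
    · exact h
    · exact absurd h (hfact_ne _)
  -- evaluate expansion at 0
  have heval0 : (0 : K) = ∑ i : Fin (N + 1), a i * (t i).eval 0 := by
    have := congrArg (Polynomial.eval 0) ha
    rw [Polynomial.eval_finset_sum] at this
    simp only [Polynomial.eval_smul, smul_eq_mul] at this
    rw [hp.2.1 n hn] at this
    exact this.symm
  have hterm : ∀ i : Fin (N + 1), a i * (t i).eval 0 =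
      (n.choose (i : ℕ) : K) * ((p (n - (i : ℕ))).eval (z (i : ℕ)) * (t (i : ℕ)).eval 0) := by
    intro i
    rcases le_or_gt (i : ℕ) n with h | h
    · rw [ha_le i h]; ring
    · rw [ha_gt i h, Nat.choose_eq_zero_of_lt h]
      simp
  rw [Finset.sum_congr rfl (fun i _ => hterm i)] at heval0
  rw [Fin.sum_univ_eq_sum_range
    (f := fun m => (n.choose m : K) * ((p (n - m)).eval (z m) * (t m).eval 0))] at heval0
  have hsub : (∑ m ∈ Finset.range (N + 1),
      (n.choose m : K) * ((p (n - m)).eval (z m) * (t m).eval 0))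
      = ∑ m ∈ Finset.range (n + 1),
        (n.choose m : K) * ((p (n - m)).eval (z m) * (t m).eval 0) := by
    symm
    apply Finset.sum_subset
    · exact Finset.range_subset_range.mpr (by omega : n + 1 ≤ N + 1)
    · intro m _ hm
      simp only [Finset.mem_range] at hm
      rw [Nat.choose_eq_zero_of_lt (by omega)]
      simp
  rw [hsub, Finset.sum_range_succ] at heval0
  have hlast : (n.choose n : K) * ((p (n - n)).eval (z n) * (t n).eval 0) = (t n).eval 0 := by
    rw [Nat.choose_self, Nat.sub_self, hp.1]
    simp
  rw [hlast] at heval0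
  linear_combination -heval0

end Analytic

theorem stmt17 {K : Type*} [Field K] [CharZero K] (d : Module.End K (Polynomial K))
    (hd : IsDeltaOperator d) (z : ℕ → K) (t p : ℕ → Polynomial K)
    (ht : IsGoncarovBasis d z t) (hp : IsBasicSequence d p) :
    ∀ n, 1 ≤ n → (t n).eval 0 =
      ∑ k ∈ Finset.Icc 1 n,
        ∑ g ∈ Finset.univ.filter (fun g : Fin n → Fin k => Function.Surjective g),
          (-1 : K) ^ k *
            ∏ i : Fin k,
              (p ((Finset.univ.filter (fun m => g m = i)).card)).eval
                (z ((Finset.univ.filter (fun m => g m < i)).card)) := by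
  classical
  have hmain : ∀ n, (t n).eval 0 = AA p z n := by
    intro n
    induction n using Nat.strong_induction_on with
    | _ n ih =>
      rcases Nat.eq_zero_or_pos n with rfl | hn
      · rw [t_zero_eq_one ht, AA_zero]
        simp
      · rw [t_eval_rec hd ht hp hn, AA_rec p z hn, ← Finset.sum_neg_distrib]
        refine Finset.sum_congr rfl (fun i hi => ?_)
        simp only [Finset.mem_range] at hi
        rw [ih i hi]
        ring
  intro n hn
  rw [hmain n]
  have hins : Finset.range (n + 1) = insert 0 (Finset.Icc 1 n) := by
    ext m
    simp only [Finset.mem_range, Finset.mem_insert, Finset.mem_Icc]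
    omega
  rw [AA, hins, Finset.sum_insert (by simp), SS_nil p z hn, zero_add]
  refine Finset.sum_congr rfl (fun k _ => ?_)
  rw [SS]
  rfl
end
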